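/- arXiv:1412.4311 — 16 statements merged into one kernel-verified Lean document; each statement's English description precedes it below -/
import Mathlib

section
/- Let D = Dⁿ ∪ Dˣ be a database instance and Q a monotone Boolean query. A tuple t ∈ Dⁿ is an actual cause for Q if and only if DF^s(t) ≠ ∅, i.e., there exists an S-repair D' of D with respect to the denial constraint ¬Q such that t ∈ D \ D' and D \ D' ⊆ Dⁿ. (Proposition 1) -/
open scoped Classical

variable {α : Type*} [DecidableEq α]

/-- A monotone Boolean query on database instances (finite sets of tuples). -/
def MonotoneQuery (Q : Finset α → Prop) : Prop :=
  ∀ ⦃X Y : Finset α⦄, X ⊆ Y → Q X → Q Y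

/-- `Γ` is a contingency set for tuple `t` wrt query `Q`, instance `D`,
endogenous part `Dn`. -/
def IsContingency (D Dn : Finset α) (Q : Finset α → Prop) (t : α) (Γ : Finset α) : Prop :=
  Γ ⊆ Dn ∧ t ∉ Γ ∧ Q (D \ Γ) ∧ ¬ Q (D \ (Γ ∪ {t}))

/-- `t` is an actual cause for `Q`. -/
def IsActualCause (D Dn : Finset α) (Q : Finset α → Prop) (t : α) : Prop :=
  t ∈ Dn ∧ ∃ Γ : Finset α, IsContingency D Dn Q t Γ

/-- Minimum cardinality of a contingency set for `t`. -/
noncomputable def minContingency (D Dn : Finset α) (Q : Finset α → Prop) (t : α) : ℕ :=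
  sInf {m : ℕ | ∃ Γ : Finset α, IsContingency D Dn Q t Γ ∧ Γ.card = m}

/-- Responsibility of `t`: `1/(1+m)` with `m` the minimum size of a contingency set,
and `0` if `t` is not an actual cause. -/
noncomputable def resp (D Dn : Finset α) (Q : Finset α → Prop) (t : α) : ℚ :=
  if IsActualCause D Dn Q t then 1 / (1 + (minContingency D Dn Q t : ℚ)) else 0

/-- `t` is a most responsible actual cause. -/
def IsMostResponsibleCause (D Dn : Finset α) (Q : Finset α → Prop) (t : α) : Prop :=
  IsActualCause D Dn Q t ∧ ∀ t' : α, ¬ resp D Dn Q t < resp D Dn Q t'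

/-- `D'` is an S-repair of `D` wrt the denial constraint `¬ Q`. -/
def IsSRepair (D : Finset α) (Q : Finset α → Prop) (D' : Finset α) : Prop :=
  D' ⊆ D ∧ ¬ Q D' ∧ ∀ D'' : Finset α, D'' ⊆ D → ¬ Q D'' → D' ⊆ D'' → D'' = D'

/-- `D'` is a C-repair of `D` wrt the denial constraint `¬ Q`. -/
def IsCRepair (D : Finset α) (Q : Finset α → Prop) (D' : Finset α) : Prop :=
  D' ⊆ D ∧ ¬ Q D' ∧ ∀ D'' : Finset α, D'' ⊆ D → ¬ Q D'' → D''.card ≤ D'.card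

/-- `Γ ∈ CT(t)`: `Γ` is an S-minimal contingency set for `t`. -/
def InCT (D Dn : Finset α) (Q : Finset α → Prop) (t : α) (Γ : Finset α) : Prop :=
  IsContingency D Dn Q t Γ ∧ ∀ Γ'' : Finset α, Γ'' ⊂ Γ → Q (D \ (Γ'' ∪ {t}))

/-- `𝔖(D)`: S-minimal subsets of `D` satisfying `Q`. -/
def Sfam (D : Finset α) (Q : Finset α → Prop) : Set (Finset α) :=
  {s | s ⊆ D ∧ Q s ∧ ∀ s' : Finset α, s' ⊂ s → ¬ Q s'}

/-- Subsets of `Dn` contained in some `s' ∈ 𝔖(D)` whose remainder is exogenous. -/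
def SnPre (D Dn Dx : Finset α) (Q : Finset α → Prop) : Set (Finset α) :=
  {s | s ⊆ Dn ∧ ∃ s' ∈ Sfam D Q, s ⊆ s' ∧ s' \ s ⊆ Dx}

/-- `𝔖ⁿ(D)`: the inclusion-minimal elements of `SnPre`. -/
def SnFam (D Dn Dx : Finset α) (Q : Finset α → Prop) : Set (Finset α) :=
  {s ∈ SnPre D Dn Dx Q | ∀ s' ∈ SnPre D Dn Dx Q, s' ⊆ s → s' = s}

/-- `H` is a hitting set for `𝔖ⁿ(D)`. -/
def IsHittingSet (D Dn Dx : Finset α) (Q : Finset α → Prop) (H : Finset α) : Prop :=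
  H ⊆ Dn ∧ ∀ s ∈ SnFam D Dn Dx Q, (H ∩ s).Nonempty

/-- `H` is an S-minimal hitting set for `𝔖ⁿ(D)`. -/
def IsSMinimalHittingSet (D Dn Dx : Finset α) (Q : Finset α → Prop) (H : Finset α) : Prop :=
  IsHittingSet D Dn Dx Q H ∧ ∀ H' : Finset α, H' ⊂ H → ¬ IsHittingSet D Dn Dx Q H'

/-- `H` is a minimum-cardinality hitting set for `𝔖ⁿ(D)`. -/
def IsMinimumHittingSet (D Dn Dx : Finset α) (Q : Finset α → Prop) (H : Finset α) : Prop :=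
  IsHittingSet D Dn Dx Q H ∧ ∀ H' : Finset α, IsHittingSet D Dn Dx Q H' → H.card ≤ H'.card

/-- `Δ` is a diagnosis for the diagnosis problem associated with `Q`. -/
def IsDiagnosis (D Dn : Finset α) (Q : Finset α → Prop) (Δ : Finset α) : Prop :=
  Δ ⊆ Dn ∧ ¬ Q (D \ Δ)

/-- `Δ ∈ 𝒟(ℳ,t)`: `Δ` is an inclusion-minimal diagnosis containing `t`. -/
def IsMinimalDiagnosisWith (D Dn : Finset α) (Q : Finset α → Prop) (t : α)
    (Δ : Finset α) : Prop :=
  IsDiagnosis D Dn Q Δ ∧ t ∈ Δ ∧ ∀ Δ' : Finset α, Δ' ⊂ Δ → ¬ IsDiagnosis D Dn Q Δ'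

/-- `Δ ∈ MCD(ℳ,t)`: `Δ` is an element of `𝒟(ℳ,t)` of minimum cardinality. -/
def IsMCDWith (D Dn : Finset α) (Q : Finset α → Prop) (t : α) (Δ : Finset α) : Prop :=
  IsMinimalDiagnosisWith D Dn Q t Δ ∧
    ∀ Δ' : Finset α, IsMinimalDiagnosisWith D Dn Q t Δ' → Δ.card ≤ Δ'.card

/-- Proposition 1: `t ∈ Dⁿ` is an actual cause for `Q` iff `DF^s(t) ≠ ∅`. -/
theorem cause_iff_srepair (D Dn Dx : Finset α) (Q : Finset α → Prop)
    (hpart : D = Dn ∪ Dx) (hdisj : Disjoint Dn Dx) (hmono : MonotoneQuery Q)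
    (t : α) (ht : t ∈ Dn) :
    IsActualCause D Dn Q t ↔
      ∃ D' : Finset α, IsSRepair D Q D' ∧ t ∈ D \ D' ∧ D \ D' ⊆ Dn := by
  have htD : t ∈ D := by
    rw [hpart]; exact Finset.mem_union_left _ ht
  constructor
  · rintro ⟨-, Γ, hΓsub, htΓ, hQ1, hQ2⟩
    -- extend D \ (Γ ∪ {t}) to a maximal Q-falsifying subset of D
    set base := D \ (Γ ∪ {t}) with hbase
    have hbsub : base ⊆ D := Finset.sdiff_subset
    obtain ⟨D', hD'mem, hD'max⟩ :=
      (D.powerset.filter (fun s => base ⊆ s ∧ ¬ Q s)).exists_max_image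
        Finset.card ⟨base, by simp [hbsub, hQ2]⟩
    simp only [Finset.mem_filter, Finset.mem_powerset] at hD'mem
    obtain ⟨hD'sub, hbD', hnQ⟩ := hD'mem
    have htD' : t ∉ D' := by
      intro htd
      apply hnQ
      apply hmono (Y := D') _ hQ1
      intro x hx
      rcases Finset.mem_sdiff.mp hx with ⟨hxD, hxΓ⟩
      by_cases hxt : x = t
      · exact hxt ▸ htd
      · exact hbD' (Finset.mem_sdiff.mpr ⟨hxD, by simp [hxΓ, hxt]⟩)
    refine ⟨D', ⟨hD'sub, hnQ, ?_⟩, Finset.mem_sdiff.mpr ⟨htD, htD'⟩, ?_⟩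
    · intro D'' hsub hnQ'' hle
      have : D''.card ≤ D'.card := hD'max _ (by
        simp only [Finset.mem_filter, Finset.mem_powerset]
        exact ⟨hsub, hbD'.trans hle, hnQ''⟩)
      exact (Finset.eq_of_subset_of_card_le hle this).symm
    · intro x hx
      rcases Finset.mem_sdiff.mp hx with ⟨hxD, hxD'⟩
      have hxb : x ∉ base := fun h => hxD' (hbD' h)
      have : x ∈ Γ ∪ {t} := by
        by_contra h; exact hxb (Finset.mem_sdiff.mpr ⟨hxD, h⟩)
      rcases Finset.mem_union.mp this with h | h
      · exact hΓsub h
      · rwa [Finset.mem_singleton.mp h]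
  · rintro ⟨D', ⟨hD'sub, hnQ, hmax⟩, htmem, hDn⟩
    rcases Finset.mem_sdiff.mp htmem with ⟨-, htD'⟩
    refine ⟨ht, (D \ D') \ {t}, ?_, by simp, ?_, ?_⟩
    · exact fun x hx => hDn (Finset.mem_sdiff.mp hx).1
    · -- D \ Γ = D' ∪ {t}
      have hset : D \ ((D \ D') \ {t}) = D' ∪ {t} := by
        ext x
        simp only [Finset.mem_sdiff, Finset.mem_union, Finset.mem_singleton]
        constructor
        · rintro ⟨hxD, hx⟩
          by_cases hxt : x = t
          · exact Or.inr hxt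
          · left
            by_contra hxD'
            exact hx ⟨⟨hxD, hxD'⟩, hxt⟩
        · rintro (hx | rfl)
          · exact ⟨hD'sub hx, fun h => h.1.2 hx⟩
          · exact ⟨htD, fun h => h.2 rfl⟩
      rw [hset]
      by_contra hQ'
      have := hmax (D' ∪ {t}) (by
        intro x hx
        rcases Finset.mem_union.mp hx with h | h
        · exact hD'sub h
        · rwa [Finset.mem_singleton.mp h]) hQ' Finset.subset_union_left
      exact htD' (this ▸ Finset.mem_union_right _ (Finset.mem_singleton_self t))
    · have hset : ((D \ D') \ {t}) ∪ {t} = D \ D' := by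
        ext x
        simp only [Finset.mem_union, Finset.mem_sdiff, Finset.mem_singleton]
        constructor
        · rintro (⟨h, -⟩ | rfl)
          · exact h
          · exact Finset.mem_sdiff.mp htmem
        · intro h
          by_cases hxt : x = t
          · exact Or.inr hxt
          · exact Or.inl ⟨h, hxt⟩
      rw [hset, Finset.sdiff_sdiff_self_left]
      intro hQ'
      exact hnQ (hmono Finset.inter_subset_right hQ')
end

section
/- Let D = Dⁿ ∪ Dˣ be a database instance, Q a monotone Boolean query, and t ∈ Dⁿ. (a) If DF^s(t) = ∅, then ρ(t) = 0. (b) Otherwise, ρ(t) = 1/|s|, where s ∈ DF^s(t) and there is no s' ∈ DF^s(t) with |s'| < |s|. (Proposition 2) -/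
open scoped Classical

variable {α : Type*} [DecidableEq α]

lemma exists_srepair_ext (D : Finset α) (Q : Finset α → Prop) (X : Finset α)
    (hX : X ⊆ D) (hQ : ¬ Q X) : ∃ D' : Finset α, IsSRepair D Q D' ∧ X ⊆ D' := by
  classical
  have hne : (D.powerset.filter (fun s => X ⊆ s ∧ ¬ Q s)).Nonempty :=
    ⟨X, by simp [hX, hQ]⟩
  obtain ⟨D', hD', hmax⟩ :=
    (D.powerset.filter (fun s => X ⊆ s ∧ ¬ Q s)).exists_max_image Finset.card hne
  simp only [Finset.mem_filter, Finset.mem_powerset] at hD'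
  refine ⟨D', ⟨hD'.1, hD'.2.2, ?_⟩, hD'.2.1⟩
  intro D'' hD''D hQ'' hsub
  have hmem : D'' ∈ D.powerset.filter (fun s => X ⊆ s ∧ ¬ Q s) := by
    simp only [Finset.mem_filter, Finset.mem_powerset]
    exact ⟨hD''D, hD'.2.1.trans hsub, hQ''⟩
  exact (Finset.eq_of_subset_of_card_le hsub (hmax _ hmem)).symm

lemma contingency_to_srepair (D Dn : Finset α) (Q : Finset α → Prop)
    (hmono : MonotoneQuery Q) (t : α) (htD : t ∈ D) (Γ : Finset α)
    (h : IsContingency D Dn Q t Γ) :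
    ∃ D' : Finset α, IsSRepair D Q D' ∧ t ∈ D \ D' ∧ D \ D' ⊆ Γ ∪ {t} := by
  obtain ⟨hΓDn, htΓ, hQ1, hQ2⟩ := h
  obtain ⟨D', hrep, hsub⟩ := exists_srepair_ext D Q (D \ (Γ ∪ {t})) Finset.sdiff_subset hQ2
  have htD' : t ∉ D' := by
    intro htD'
    have hss : D \ Γ ⊆ D' := by
      intro x hx
      rcases Finset.mem_sdiff.1 hx with ⟨hxD, hxΓ⟩
      by_cases hxt : x = t
      · exact hxt ▸ htD'
      · exact hsub (Finset.mem_sdiff.2 ⟨hxD, by simp [hxΓ, hxt]⟩)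
    exact hrep.2.1 (hmono hss hQ1)
  refine ⟨D', hrep, Finset.mem_sdiff.2 ⟨htD, htD'⟩, ?_⟩
  intro x hx
  rcases Finset.mem_sdiff.1 hx with ⟨hxD, hxD'⟩
  by_contra hxn
  exact hxD' (hsub (Finset.mem_sdiff.2 ⟨hxD, hxn⟩))

/-- Proposition 2: responsibility in terms of the differences with S-repairs. -/
theorem resp_via_srepairs (D Dn Dx : Finset α) (Q : Finset α → Prop)
    (hpart : D = Dn ∪ Dx) (hdisj : Disjoint Dn Dx) (hmono : MonotoneQuery Q)
    (t : α) (ht : t ∈ Dn) :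
    ((¬ ∃ D' : Finset α, IsSRepair D Q D' ∧ t ∈ D \ D' ∧ D \ D' ⊆ Dn) →
        resp D Dn Q t = 0) ∧
    (∀ D' : Finset α, IsSRepair D Q D' → t ∈ D \ D' → D \ D' ⊆ Dn →
      (¬ ∃ D'' : Finset α, IsSRepair D Q D'' ∧ t ∈ D \ D'' ∧ D \ D'' ⊆ Dn ∧
          (D \ D'').card < (D \ D').card) →
      resp D Dn Q t = 1 / ((D \ D').card : ℚ)) := by
  have htD : t ∈ D := hpart ▸ Finset.mem_union_left _ ht
  constructor
  · intro hno
    rw [resp, if_neg]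
    rintro ⟨-, Γ, hC⟩
    obtain ⟨D', hrep, htd, hsub⟩ := contingency_to_srepair D Dn Q hmono t htD Γ hC
    refine hno ⟨D', hrep, htd, hsub.trans ?_⟩
    intro x hx
    rcases Finset.mem_union.1 hx with h | h
    · exact hC.1 h
    · exact (Finset.mem_singleton.1 h) ▸ ht
  · intro D' hrep htd hsubDn hmin
    have htD' : t ∉ D' := (Finset.mem_sdiff.1 htd).2
    set Γ0 := (D \ D').erase t with hΓ0
    have hunion : Γ0 ∪ {t} = D \ D' := by
      ext x
      simp only [hΓ0, Finset.mem_union, Finset.mem_erase, Finset.mem_singleton]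
      by_cases hx : x = t
      · simp [hx, htd]
      · simp [hx]
    have hC0 : IsContingency D Dn Q t Γ0 := by
      refine ⟨fun x hx => hsubDn (Finset.mem_of_mem_erase hx), Finset.notMem_erase _ _, ?_, ?_⟩
      · have hins : D \ Γ0 = insert t D' := by
          ext x
          simp only [Finset.mem_sdiff, hΓ0, Finset.mem_erase, Finset.mem_insert]
          constructor
          · rintro ⟨hxD, hx⟩
            by_cases hxt : x = t
            · exact Or.inl hxt
            · right
              by_contra hxD'
              exact hx ⟨hxt, hxD, hxD'⟩
          · rintro (rfl | hxD')
            · exact ⟨htD, fun h => h.1 rfl⟩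
            · exact ⟨hrep.1 hxD', fun h => h.2.2 hxD'⟩
        rw [hins]
        by_contra hQ
        have := hrep.2.2 (insert t D') (Finset.insert_subset htD hrep.1) hQ
          (Finset.subset_insert _ _)
        exact htD' (this ▸ Finset.mem_insert_self t D')
      · rw [hunion, Finset.sdiff_sdiff_eq_self hrep.1]
        exact hrep.2.1
    have hcause : IsActualCause D Dn Q t := ⟨ht, Γ0, hC0⟩
    have hcard0 : Γ0.card = (D \ D').card - 1 := Finset.card_erase_of_mem htd
    have hpos : 1 ≤ (D \ D').card := Finset.card_pos.2 ⟨t, htd⟩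
    -- upper bound on minContingency
    have hle : minContingency D Dn Q t ≤ (D \ D').card - 1 := by
      apply Nat.sInf_le
      exact ⟨Γ0, hC0, hcard0⟩
    -- lower bound
    have hne : {m : ℕ | ∃ Γ : Finset α, IsContingency D Dn Q t Γ ∧ Γ.card = m}.Nonempty :=
      ⟨Γ0.card, Γ0, hC0, rfl⟩
    obtain ⟨Γ, hCΓ, hΓcard⟩ := Nat.sInf_mem hne
    obtain ⟨D'', hrep'', htd'', hsub''⟩ := contingency_to_srepair D Dn Q hmono t htD Γ hCΓ
    have hsub''Dn : D \ D'' ⊆ Dn := by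
      refine hsub''.trans ?_
      intro x hx
      rcases Finset.mem_union.1 hx with h | h
      · exact hCΓ.1 h
      · exact (Finset.mem_singleton.1 h) ▸ ht
    have hge : (D \ D').card ≤ (D \ D'').card := by
      by_contra hlt
      exact hmin ⟨D'', hrep'', htd'', hsub''Dn, Nat.lt_of_not_le hlt⟩
    have hub : (D \ D'').card ≤ Γ.card + 1 := by
      calc (D \ D'').card ≤ (Γ ∪ {t}).card := Finset.card_le_card hsub''
        _ ≤ Γ.card + 1 := by
            simpa using Finset.card_union_le Γ {t}
    have hmc : minContingency D Dn Q t = Γ.card := hΓcard.symm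
    have hkey : (D \ D').card = minContingency D Dn Q t + 1 := by
      omega
    rw [resp, if_pos hcause, hkey]
    push_cast
    ring_nf
end

section
/- Let D be a database instance in which all tuples are endogenous (Dⁿ = D, Dˣ = ∅) and Q a monotone Boolean query. A tuple t ∈ D is a most responsible actual cause for Q if and only if DF^c(t) ≠ ∅, i.e., there exists a C-repair D' of D with respect to the denial constraint ¬Q such that t ∈ D \ D'. (Corollary 1, stated for all-endogenous instances) -/
open scoped Classical

variable {α : Type*} [DecidableEq α]

private lemma respAux1 (m n : ℕ) (h : m ≤ n) : 1/(1+(n:ℚ)) ≤ 1/(1+(m:ℚ)) := by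
  apply one_div_le_one_div_of_le
  · positivity
  · have : (m:ℚ) ≤ n := by exact_mod_cast h
    linarith

private lemma respAux2 (m n : ℕ) (h : 1/(1+(m:ℚ)) ≤ 1/(1+(n:ℚ))) : n ≤ m := by
  by_contra hc
  push_neg at hc
  have hc' : (m:ℚ) < n := by exact_mod_cast hc
  have := one_div_lt_one_div_of_lt (by positivity : (0:ℚ) < 1 + m)
    (by linarith : (1:ℚ) + m < 1 + n)
  linarith

private lemma cont_card_lower {D D' Γ : Finset α} {Q : Finset α → Prop} {u : α}
    (hC : IsCRepair D Q D') (hΓ : IsContingency D D Q u Γ) :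
    D.card ≤ D'.card + Γ.card + 1 := by
  have h1 := hC.2.2 _ (Finset.sdiff_subset) hΓ.2.2.2
  have h2 : D ⊆ (D \ (Γ ∪ {u})) ∪ (Γ ∪ {u}) := by
    intro a ha
    by_cases h : a ∈ Γ ∪ {u} <;> simp [Finset.mem_union, Finset.mem_sdiff, ha, h] <;> tauto
  have h3 := Finset.card_le_card h2
  have h4 := Finset.card_union_le (D \ (Γ ∪ {u})) (Γ ∪ {u})
  have h5 := Finset.card_union_le Γ ({u} : Finset α)
  simp only [Finset.card_singleton] at h5
  omega

private lemma crepair_cause {D D' : Finset α} {Q : Finset α → Prop}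
    (hC : IsCRepair D Q D') {u : α} (hu : u ∈ D) (hu' : u ∉ D') :
    IsContingency D D Q u ((D \ D') \ {u}) ∧
      D.card = D'.card + ((D \ D') \ {u}).card + 1 := by
  have hsub : D' ⊆ D := hC.1
  have huD : u ∈ D \ D' := Finset.mem_sdiff.mpr ⟨hu, hu'⟩
  have hkey : D \ ((D \ D') \ {u}) = D' ∪ {u} := by
    rw [sdiff_sdiff_right', Finset.sdiff_sdiff_eq_self hsub]
    simp only [Finset.sup_eq_union, Finset.inf_eq_inter]
    rw [Finset.inter_singleton_of_mem hu]
  have hcard1 : ((D \ D') \ {u}).card + 1 = (D \ D').card := by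
    have hss : ({u} : Finset α) ⊆ D \ D' := Finset.singleton_subset_iff.mpr huD
    rw [← Finset.card_sdiff_add_card_eq_card hss, Finset.card_singleton]
  have hcard2 : (D \ D').card + D'.card = D.card := Finset.card_sdiff_add_card_eq_card hsub
  refine ⟨⟨(Finset.sdiff_subset).trans Finset.sdiff_subset, by simp, ?_, ?_⟩, by omega⟩
  · rw [hkey]
    by_contra hQ
    have h5 := hC.2.2 _ (Finset.union_subset hsub (Finset.singleton_subset_iff.mpr hu)) hQ
    have h6 : (D' ∪ {u}).card = D'.card + 1 := by
      rw [Finset.union_comm, ← Finset.insert_eq, Finset.card_insert_of_notMem hu']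
    omega
  · have h7 : ((D \ D') \ {u}) ∪ {u} = D \ D' :=
      Finset.sdiff_union_of_subset (Finset.singleton_subset_iff.mpr huD)
    rw [h7, Finset.sdiff_sdiff_eq_self hsub]
    exact hC.2.1

private lemma crepair_min {D D' : Finset α} {Q : Finset α → Prop}
    (hC : IsCRepair D Q D') {u : α} (hu : u ∈ D) (hu' : u ∉ D') :
    IsActualCause D D Q u ∧ D.card = D'.card + minContingency D D Q u + 1 := by
  obtain ⟨hcont, hcard⟩ := crepair_cause hC hu hu'
  have hAC : IsActualCause D D Q u := ⟨hu, _, hcont⟩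
  have hmem : ((D \ D') \ {u}).card ∈
      {m : ℕ | ∃ Γ, IsContingency D D Q u Γ ∧ Γ.card = m} := ⟨_, hcont, rfl⟩
  have hne : {m : ℕ | ∃ Γ, IsContingency D D Q u Γ ∧ Γ.card = m}.Nonempty := ⟨_, hmem⟩
  obtain ⟨Γm, hΓm, hΓmc⟩ := Nat.sInf_mem hne
  have h1 : minContingency D D Q u ≤ ((D \ D') \ {u}).card := Nat.sInf_le hmem
  have h2 := cont_card_lower hC hΓm
  have h3 : Γm.card = minContingency D D Q u := hΓmc
  exact ⟨hAC, by omega⟩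

/-- Corollary 1 (all tuples endogenous): `t` is a most responsible actual cause
for `Q` iff `DF^c(t) ≠ ∅`. -/
theorem mrc_iff_crepair (D : Finset α) (Q : Finset α → Prop) (hmono : MonotoneQuery Q)
    (t : α) (ht : t ∈ D) :
    IsMostResponsibleCause D D Q t ↔
      ∃ D' : Finset α, IsCRepair D Q D' ∧ t ∈ D \ D' ∧ D \ D' ⊆ D := by
  have hContSet : ∀ u : α, {m : ℕ | ∃ Γ, IsContingency D D Q u Γ ∧ Γ.card = m} =
      {m : ℕ | ∃ Γ, IsContingency D D Q u Γ ∧ Γ.card = m} := fun _ => rfl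
  constructor
  · rintro ⟨hAC, hmax⟩
    obtain ⟨htD, Γ₀, hΓ₀⟩ := hAC
    have hQempty : ¬ Q ∅ := fun h => hΓ₀.2.2.2 (hmono (Finset.empty_subset _) h)
    have hne : (D.powerset.filter fun x => ¬ Q x).Nonempty :=
      ⟨∅, Finset.mem_filter.mpr ⟨Finset.empty_mem_powerset _, hQempty⟩⟩
    obtain ⟨D₀, hD₀, hmaxc⟩ := Finset.exists_max_image _ Finset.card hne
    rw [Finset.mem_filter, Finset.mem_powerset] at hD₀
    have hC₀ : IsCRepair D Q D₀ :=
      ⟨hD₀.1, hD₀.2, fun D'' h1 h2 =>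
        hmaxc _ (Finset.mem_filter.mpr ⟨Finset.mem_powerset.mpr h1, h2⟩)⟩
    have hQD : Q D := hmono Finset.sdiff_subset hΓ₀.2.2.1
    have hneD : (D \ D₀).Nonempty := by
      rw [Finset.sdiff_nonempty]
      intro hsub
      exact hD₀.2 (hmono hsub hQD)
    obtain ⟨s, hs⟩ := hneD
    rw [Finset.mem_sdiff] at hs
    obtain ⟨hACs, hcards⟩ := crepair_min hC₀ hs.1 hs.2
    have hACt : IsActualCause D D Q t := ⟨htD, Γ₀, hΓ₀⟩
    have hmt := hmax s
    rw [resp, resp, if_pos hACt, if_pos hACs, not_lt] at hmt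
    have hle : minContingency D D Q t ≤ minContingency D D Q s := respAux2 _ _ hmt
    have hsetne : {m : ℕ | ∃ Γ, IsContingency D D Q t Γ ∧ Γ.card = m}.Nonempty :=
      ⟨Γ₀.card, Γ₀, hΓ₀, rfl⟩
    obtain ⟨Γ, hΓ, hΓcard⟩ := Nat.sInf_mem hsetne
    have hΓcard' : Γ.card = minContingency D D Q t := hΓcard
    refine ⟨D \ (Γ ∪ {t}), ⟨Finset.sdiff_subset, hΓ.2.2.2, ?_⟩, ?_, Finset.sdiff_subset⟩
    · intro D'' h1 h2
      have h3 := hC₀.2.2 D'' h1 h2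
      have hsubΓ : Γ ∪ {t} ⊆ D :=
        Finset.union_subset hΓ.1 (Finset.singleton_subset_iff.mpr htD)
      have h4 : (D \ (Γ ∪ {t})).card + (Γ ∪ {t}).card = D.card :=
        Finset.card_sdiff_add_card_eq_card hsubΓ
      have h5 : (Γ ∪ {t}).card = Γ.card + 1 := by
        rw [Finset.union_comm, ← Finset.insert_eq, Finset.card_insert_of_notMem hΓ.2.1]
      omega
    · exact Finset.mem_sdiff.mpr ⟨htD, by simp⟩
  · rintro ⟨D', hC, htm, -⟩
    rw [Finset.mem_sdiff] at htm
    obtain ⟨hACt, hcardt⟩ := crepair_min hC htm.1 htm.2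
    refine ⟨hACt, fun t' => ?_⟩
    rw [not_lt]
    simp only [resp]
    rw [if_pos hACt]
    split_ifs with h'
    · obtain ⟨ht'D, Γ', hΓ'⟩ := h'
      have hsetne : {m : ℕ | ∃ Γ, IsContingency D D Q t' Γ ∧ Γ.card = m}.Nonempty :=
        ⟨Γ'.card, Γ', hΓ', rfl⟩
      obtain ⟨Γm, hΓm, hΓmc⟩ := Nat.sInf_mem hsetne
      have hΓmc' : Γm.card = minContingency D D Q t' := hΓmc
      have hlow := cont_card_lower hC hΓm
      exact respAux1 _ _ (by omega)
    · positivity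
end

section
/- Let D be a database instance in which all tuples are endogenous and Q a monotone Boolean query (the disjunction of the violation views of a set of denial constraints). For every proper subset D' ⊊ D: D' is an S-repair of D with respect to ¬Q if and only if for every t ∈ D \ D', t is an actual cause for Q and D \ (D' ∪ {t}) ∈ CT(t). (Proposition 3) -/
open scoped Classical

variable {α : Type*} [DecidableEq α]

/-- Proposition 3: S-repairs from causes and S-minimal contingency sets. -/
theorem srepair_iff_causes (D : Finset α) (Q : Finset α → Prop) (hmono : MonotoneQuery Q)
    (D' : Finset α) (hss : D' ⊂ D) :
    IsSRepair D Q D' ↔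
      ∀ t ∈ D \ D', IsActualCause D D Q t ∧ InCT D D Q t (D \ (D' ∪ {t})) := by
  have hsub : D' ⊆ D := hss.subset
  constructor
  · rintro ⟨hD'D, hnQ, hmax⟩ t ht
    simp only [Finset.mem_sdiff] at ht
    obtain ⟨htD, htD'⟩ := ht
    have hA1 : D \ (D \ (D' ∪ {t})) = D' ∪ {t} := by
      ext x
      simp only [Finset.mem_sdiff, Finset.mem_union, Finset.mem_singleton]
      constructor
      · tauto
      · rintro (h | h)
        · exact ⟨hsub h, fun h' => h'.2 (Or.inl h)⟩
        · subst h; exact ⟨htD, fun h' => h'.2 (Or.inr rfl)⟩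
    have hA2 : D \ ((D \ (D' ∪ {t})) ∪ {t}) = D' := by
      ext x
      have hx1 : x ∈ D' → x ∈ D := fun h => hsub h
      have hx2 : x ∈ D' → x ≠ t := fun h he => htD' (he ▸ h)
      simp only [Finset.mem_sdiff, Finset.mem_union, Finset.mem_singleton]
      tauto
    have hQDt : Q (D' ∪ {t}) := by
      by_contra hq
      have := hmax (D' ∪ {t}) (Finset.union_subset hsub (Finset.singleton_subset_iff.mpr htD))
        hq Finset.subset_union_left
      exact htD' (this ▸ Finset.mem_union_right _ (Finset.mem_singleton_self t))
    have hcont : IsContingency D D Q t (D \ (D' ∪ {t})) := by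
      refine ⟨Finset.sdiff_subset, ?_, ?_, ?_⟩
      · simp
      · rw [hA1]; exact hQDt
      · rw [hA2]; exact hnQ
    refine ⟨⟨htD, _, hcont⟩, hcont, ?_⟩
    intro Γ'' hΓ''
    by_contra hq
    -- E := D \ (Γ'' ∪ {t}) contains D' properly, is ⊆ D, ¬Q E → E = D' contradiction
    set E := D \ (Γ'' ∪ {t}) with hE
    have hED : E ⊆ D := Finset.sdiff_subset
    have hD'E : D' ⊆ E := by
      intro x hx
      simp only [hE, Finset.mem_sdiff, Finset.mem_union, Finset.mem_singleton]
      refine ⟨hsub hx, ?_⟩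
      push_neg
      constructor
      · intro hxΓ
        have := hΓ''.subset hxΓ
        simp only [Finset.mem_sdiff, Finset.mem_union] at this
        exact this.2 (Or.inl hx)
      · intro h; exact htD' (h ▸ hx)
    have := hmax E hED hq hD'E
    -- but E ≠ D' since some x ∈ Γ_t \ Γ'' is in E \ D'
    obtain ⟨x, hxΓt, hxΓ''⟩ := Finset.exists_of_ssubset hΓ''
    simp only [Finset.mem_sdiff, Finset.mem_union, Finset.mem_singleton] at hxΓt
    have hxE : x ∈ E := by
      simp only [hE, Finset.mem_sdiff, Finset.mem_union, Finset.mem_singleton]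
      exact ⟨hxΓt.1, fun h => h.elim hxΓ'' (fun h => hxΓt.2 (Or.inr h))⟩
    rw [this] at hxE
    exact hxΓt.2 (Or.inl hxE)
  · intro h
    obtain ⟨t0, ht0D, ht0D'⟩ := Finset.exists_of_ssubset hss
    have ht0 : t0 ∈ D \ D' := Finset.mem_sdiff.mpr ⟨ht0D, ht0D'⟩
    obtain ⟨_, hcont0, _⟩ := h t0 ht0
    have hA2 : D \ ((D \ (D' ∪ {t0})) ∪ {t0}) = D' := by
      ext x
      have hx1 : x ∈ D' → x ∈ D := fun hh => hsub hh
      have hx2 : x ∈ D' → x ≠ t0 := fun hh he => ht0D' (he ▸ hh)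
      simp only [Finset.mem_sdiff, Finset.mem_union, Finset.mem_singleton]
      tauto
    have hnQ : ¬ Q D' := by
      have := hcont0.2.2.2
      rwa [hA2] at this
    refine ⟨hsub, hnQ, ?_⟩
    intro D'' hD''D hnQ'' hD'D''
    by_contra hne
    obtain ⟨t, htD'', htD'⟩ := Finset.exists_of_ssubset (lt_of_le_of_ne hD'D'' (Ne.symm hne))
    have htD : t ∈ D := hD''D htD''
    have ht : t ∈ D \ D' := Finset.mem_sdiff.mpr ⟨htD, htD'⟩
    obtain ⟨_, hcont, hmin⟩ := h t ht
    have hA1 : D \ (D \ (D' ∪ {t})) = D' ∪ {t} := by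
      ext x
      simp only [Finset.mem_sdiff, Finset.mem_union, Finset.mem_singleton]
      constructor
      · tauto
      · rintro (hh | hh)
        · exact ⟨hsub hh, fun h' => h'.2 (Or.inl hh)⟩
        · subst hh; exact ⟨htD, fun h' => h'.2 (Or.inr rfl)⟩
    have hQD't : Q (D' ∪ {t}) := by
      have := hcont.2.2.1
      rwa [hA1] at this
    set Γ'' := D \ (D'' ∪ {t}) with hΓ''
    have hΓsub : Γ'' ⊆ D \ (D' ∪ {t}) := by
      apply Finset.sdiff_subset_sdiff (le_refl D)
      exact Finset.union_subset_union hD'D'' (le_refl _)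
    have hB : D \ (Γ'' ∪ {t}) = D'' \ {t} := by
      ext x
      have hx1 : x ∈ D'' → x ∈ D := fun hh => hD''D hh
      simp only [hΓ'', Finset.mem_sdiff, Finset.mem_union, Finset.mem_singleton]
      tauto
    by_cases hprop : Γ'' = D \ (D' ∪ {t})
    · -- then D'' ∪ {t} ∩ D = D' ∪ {t}, so D'' ⊆ D' ∪ {t}
      have hD''sub : D'' ⊆ D' ∪ {t} := by
        intro x hx
        by_contra hxn
        have hxΓ : x ∈ D \ (D' ∪ {t}) := Finset.mem_sdiff.mpr ⟨hD''D hx, hxn⟩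
        rw [← hprop, hΓ''] at hxΓ
        exact (Finset.mem_sdiff.mp hxΓ).2 (Finset.mem_union_left _ hx)
      have hEq : D'' = D' ∪ {t} :=
        Finset.Subset.antisymm hD''sub
          (Finset.union_subset hD'D'' (Finset.singleton_subset_iff.mpr htD''))
      exact hnQ'' (hEq ▸ hQD't)
    · have hΓss : Γ'' ⊂ D \ (D' ∪ {t}) := lt_of_le_of_ne hΓsub hprop
      have := hmin Γ'' hΓss
      rw [hB] at this
      exact hnQ'' (hmono (Finset.sdiff_subset) this)
end

section
/- Let D be a database instance in which all tuples are endogenous and Q a monotone Boolean query. (a) If t is an actual cause for Q and Γ ∈ CT(t), then D \ (Γ ∪ {t}) is an S-repair of D with respect to ¬Q. (b) If t is a most responsible actual cause for Q and Γ is a contingency set for t of minimum cardinality, then D \ (Γ ∪ {t}) is a C-repair of D with respect to ¬Q. (Corollary 2) -/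
open scoped Classical

variable {α : Type*} [DecidableEq α]

/-- Corollary 2: removing a cause together with one of its S-minimal (resp.
C-minimal) contingency sets yields an S-repair (resp. a C-repair). -/
theorem repairs_from_causes (D : Finset α) (Q : Finset α → Prop) (hmono : MonotoneQuery Q)
    (t : α) (Γ : Finset α) :
    (IsActualCause D D Q t → InCT D D Q t Γ → IsSRepair D Q (D \ (Γ ∪ {t}))) ∧
    (IsMostResponsibleCause D D Q t → IsContingency D D Q t Γ →
      (∀ Γ' : Finset α, IsContingency D D Q t Γ' → Γ.card ≤ Γ'.card) →
      IsCRepair D Q (D \ (Γ ∪ {t}))) := by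
  constructor
  · rintro ⟨htD, -⟩ ⟨⟨hΓD, htΓ, hQ1, hQ2⟩, hmin⟩
    refine ⟨Finset.sdiff_subset, hQ2, ?_⟩
    intro D'' hD''D hnQ hsub
    by_cases htD'' : t ∈ D''
    · exfalso
      apply hnQ
      apply hmono _ hQ1
      intro x hx
      simp only [Finset.mem_sdiff] at hx
      by_cases hxt : x = t
      · exact hxt ▸ htD''
      · exact hsub (by simp [Finset.mem_sdiff, hx.1, hx.2, hxt])
    · set Γ'' := Γ \ D'' with hΓ''
      have hsub' : ∀ x, x ∈ D → x ∉ Γ → x ≠ t → x ∈ D'' := fun x h1 h2 h3 =>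
        hsub (by simp [Finset.mem_sdiff, h1, h2, h3])
      have heq : D'' = D \ (Γ'' ∪ {t}) := by
        ext x
        have hD : x ∈ D'' → x ∈ D := fun h => hD''D h
        have hnt : x ∈ D'' → x ≠ t := fun h hh => htD'' (hh ▸ h)
        have hs := hsub' x
        simp only [Finset.mem_sdiff, Finset.mem_union, Finset.mem_singleton, hΓ'']
        tauto
      by_cases hΓeq : Γ'' = Γ
      · rw [heq, hΓeq]
      · exfalso
        have hss : Γ'' ⊂ Γ := (Finset.sdiff_subset).ssubset_of_ne hΓeq
        exact hnQ (heq ▸ hmin Γ'' hss)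
  · rintro ⟨⟨htD, ⟨Γ₀, hΓ₀⟩⟩, hmost⟩ ⟨hΓD, htΓ, hQ1, hQ2⟩ hminc
    have hQD : Q D := hmono Finset.sdiff_subset hQ1
    refine ⟨Finset.sdiff_subset, hQ2, ?_⟩
    intro D'' hD''D hnQ''
    -- pick a maximum-cardinality subset of D falsifying Q
    have hne : (D.powerset.filter (fun X => ¬ Q X)).Nonempty :=
      ⟨D \ (Γ ∪ {t}), by rw [Finset.mem_filter, Finset.mem_powerset]; exact ⟨Finset.sdiff_subset, hQ2⟩⟩
    obtain ⟨M, hM, hMmax⟩ := Finset.exists_max_image _ Finset.card hne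
    simp only [Finset.mem_filter, Finset.mem_powerset] at hM
    obtain ⟨hMD, hnQM⟩ := hM
    have hcard'' : D''.card ≤ M.card := by
      apply hMmax
      simp [Finset.mem_filter, Finset.mem_powerset, hD''D, hnQ'']
    have hMne : M ≠ D := fun h => hnQM (h ▸ hQD)
    obtain ⟨t', ht'D, ht'M⟩ : ∃ t', t' ∈ D ∧ t' ∉ M := by
      by_contra hc
      push_neg at hc
      exact hMne (Finset.Subset.antisymm hMD hc)
    set Γ' := D \ (M ∪ {t'}) with hΓ'
    have hΓ'D : Γ' ⊆ D := Finset.sdiff_subset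
    have ht'Γ' : t' ∉ Γ' := by simp [hΓ']
    have hsub2' : M ∪ {t'} ⊆ D := Finset.union_subset hMD (by simpa using ht'D)
    have hDsub1 : D \ Γ' = M ∪ {t'} := by
      rw [hΓ', Finset.sdiff_sdiff_self_left, Finset.inter_eq_right.mpr hsub2']
    have hDsub2 : D \ (Γ' ∪ {t'}) = M := by
      ext x
      have h1 : x ∈ M → x ≠ t' := fun h he => ht'M (he ▸ h)
      have h2 : x ∈ M → x ∈ D := fun h => hMD h
      simp only [hΓ', Finset.mem_sdiff, Finset.mem_union, Finset.mem_singleton]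
      tauto
    have hQM' : Q (M ∪ {t'}) := by
      by_contra hc
      have : (M ∪ {t'}).card ≤ M.card := by
        apply hMmax
        simp only [Finset.mem_filter, Finset.mem_powerset]
        exact ⟨Finset.union_subset hMD (by simpa using ht'D), hc⟩
      have : M.card < (M ∪ {t'}).card := by
        apply Finset.card_lt_card
        constructor
        · exact Finset.subset_union_left
        · intro h
          exact ht'M (h (by simp))
      omega
    have hcont' : IsContingency D D Q t' Γ' :=
      ⟨hΓ'D, ht'Γ', by rw [hDsub1]; exact hQM', by rw [hDsub2]; exact hnQM⟩
    have hcause' : IsActualCause D D Q t' := ⟨ht'D, Γ', hcont'⟩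
    have hcause : IsActualCause D D Q t := ⟨htD, Γ₀, hΓ₀⟩
    -- minContingency values
    have hmΓ : minContingency D D Q t = Γ.card := by
      apply le_antisymm
      · exact Nat.sInf_le ⟨Γ, ⟨hΓD, htΓ, hQ1, hQ2⟩, rfl⟩
      · have hmem : minContingency D D Q t ∈
            {m : ℕ | ∃ Γ' : Finset α, IsContingency D D Q t Γ' ∧ Γ'.card = m} :=
          Nat.sInf_mem ⟨Γ.card, Γ, ⟨hΓD, htΓ, hQ1, hQ2⟩, rfl⟩
        obtain ⟨Γ₁, hΓ₁, hc₁⟩ := hmem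
        rw [← hc₁]
        exact hminc Γ₁ hΓ₁
    have hm'le : minContingency D D Q t' ≤ Γ'.card :=
      Nat.sInf_le ⟨Γ', hcont', rfl⟩
    have hle : minContingency D D Q t ≤ minContingency D D Q t' := by
      have h := hmost t'
      rw [not_lt] at h
      unfold resp at h
      rw [if_pos hcause, if_pos hcause'] at h
      set m := minContingency D D Q t
      set m' := minContingency D D Q t'
      have hpos : (0 : ℚ) < 1 + (m : ℚ) := by positivity
      have hpos' : (0 : ℚ) < 1 + (m' : ℚ) := by positivity
      rw [div_le_div_iff₀ hpos' hpos] at h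
      have : (1 : ℚ) + m ≤ 1 + m' := by linarith
      have := (add_le_add_iff_left (1 : ℚ)).mp this
      exact_mod_cast this
    have hΓle : Γ.card ≤ Γ'.card := by
      rw [hmΓ] at hle
      exact hle.trans hm'le
    -- cardinality computation
    have h1 : (Γ ∪ {t}).card = Γ.card + 1 := by
      rw [Finset.union_comm, ← Finset.insert_eq, Finset.card_insert_of_notMem htΓ]
    have h2 : (Γ' ∪ {t'}).card = Γ'.card + 1 := by
      rw [Finset.union_comm, ← Finset.insert_eq, Finset.card_insert_of_notMem ht'Γ']
    have hsub1 : Γ ∪ {t} ⊆ D := Finset.union_subset hΓD (by simpa using htD)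
    have hsub2 : Γ' ∪ {t'} ⊆ D := Finset.union_subset hΓ'D (by simpa using ht'D)
    have hMcard : M.card = D.card - (Γ'.card + 1) := by
      rw [← hDsub2, Finset.card_sdiff_of_subset hsub2, h2]
    have hDcard : (D \ (Γ ∪ {t})).card = D.card - (Γ.card + 1) := by
      rw [Finset.card_sdiff_of_subset hsub1, h1]
    rw [hDcard]
    calc D''.card ≤ M.card := hcard''
      _ = D.card - (Γ'.card + 1) := hMcard
      _ ≤ D.card - (Γ.card + 1) := Nat.sub_le_sub_left (by omega) _
end

section
/- Let D = Dⁿ ∪ Dˣ be a database instance and Q a monotone Boolean query. A tuple t ∈ Dⁿ is an actual cause for Q if and only if there exists s ∈ 𝔖ⁿ(D) with t ∈ s. (Proposition 5(a)) -/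
open scoped Classical

variable {α : Type*} [DecidableEq α]

/-- Any subset of `D` satisfying `Q` contains an inclusion-minimal one. -/
lemma exists_sfam_subset (D : Finset α) (Q : Finset α → Prop) {X : Finset α}
    (hXD : X ⊆ D) (hQ : Q X) : ∃ s ∈ Sfam D Q, s ⊆ X := by
  classical
  have hne : (X.powerset.filter (fun s => Q s)).Nonempty :=
    ⟨X, by simp [hQ]⟩
  obtain ⟨s, hs, hmin⟩ := Finset.exists_min_image _ Finset.card hne
  simp only [Finset.mem_filter, Finset.mem_powerset] at hs
  refine ⟨s, ⟨hs.1.trans hXD, hs.2, ?_⟩, hs.1⟩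
  intro s'' hss hQ''
  have hle : s.card ≤ s''.card := hmin s''
    (by simp only [Finset.mem_filter, Finset.mem_powerset]
        exact ⟨hss.subset.trans hs.1, hQ''⟩)
  exact absurd hle (not_le.mpr (Finset.card_lt_card hss))

/-- Proposition 5(a): `t` is an actual cause for `Q` iff `t` belongs to some
member of `𝔖ⁿ(D)`. -/
theorem cause_iff_mem_SnFam (D Dn Dx : Finset α) (Q : Finset α → Prop)
    (hpart : D = Dn ∪ Dx) (hdisj : Disjoint Dn Dx) (hmono : MonotoneQuery Q)
    (t : α) (ht : t ∈ Dn) :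
    IsActualCause D Dn Q t ↔ ∃ s ∈ SnFam D Dn Dx Q, t ∈ s := by
  classical
  constructor
  · rintro ⟨-, Γ0, hΓ0Dn, htΓ0, hQ0, hnQ0⟩
    -- pick a contingency set Γ ⊇ Γ0 of maximal cardinality
    set T := Dn.powerset.filter (fun Γ => Γ0 ⊆ Γ ∧ t ∉ Γ ∧ Q (D \ Γ)) with hT
    have hne : T.Nonempty := ⟨Γ0, by simp [hT, hΓ0Dn, htΓ0, hQ0]⟩
    obtain ⟨Γ, hΓT, hmax⟩ := Finset.exists_max_image T Finset.card hne
    simp only [hT, Finset.mem_filter, Finset.mem_powerset] at hΓT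
    obtain ⟨hΓDn, hΓ0Γ, htΓ, hQΓ⟩ := hΓT
    have hnQΓt : ¬ Q (D \ (Γ ∪ {t})) := fun h => hnQ0 (hmono
      (Finset.sdiff_subset_sdiff le_rfl (Finset.union_subset_union hΓ0Γ le_rfl)) h)
    -- minimal subset of D \ Γ satisfying Q
    obtain ⟨s', hs'Sfam, hs'sub⟩ := exists_sfam_subset D Q Finset.sdiff_subset hQΓ
    have hts' : t ∈ s' := by
      by_contra hts'
      refine hnQΓt (hmono ?_ hs'Sfam.2.1)
      intro x hx
      have hxD : x ∈ D \ Γ := hs'sub hx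
      rw [Finset.mem_sdiff] at hxD ⊢
      refine ⟨hxD.1, ?_⟩
      simp only [Finset.mem_union, Finset.mem_singleton]
      rintro (h | rfl)
      · exact hxD.2 h
      · exact hts' hx
    refine ⟨s' ∩ Dn, ⟨⟨Finset.inter_subset_right, s', hs'Sfam,
        Finset.inter_subset_left, ?_⟩, ?_⟩, Finset.mem_inter.mpr ⟨hts', ht⟩⟩
    · -- s' \ (s' ∩ Dn) ⊆ Dx
      intro x hx
      rw [Finset.mem_sdiff, Finset.mem_inter] at hx
      have hxD : x ∈ D := hs'Sfam.1 hx.1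
      rw [hpart, Finset.mem_union] at hxD
      rcases hxD with h | h
      · exact absurd ⟨hx.1, h⟩ hx.2
      · exact h
    · -- minimality
      rintro s0 ⟨hs0Dn, s0', hs0'Sfam, hs0sub, hs0dx⟩ hs0s
      by_contra hne'
      obtain ⟨u, hus, hus0⟩ := Finset.exists_of_ssubset ⟨hs0s, fun h => hne' (Finset.Subset.antisymm hs0s h)⟩
      have huDn : u ∈ Dn := (Finset.mem_inter.mp hus).2
      have huΓ : u ∉ Γ := by
        have := hs'sub (Finset.mem_inter.mp hus).1
        exact (Finset.mem_sdiff.mp this).2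
      have hQu : Q (D \ (Γ ∪ {u})) := by
        refine hmono ?_ hs0'Sfam.2.1
        intro x hx
        rw [Finset.mem_sdiff]
        refine ⟨hs0'Sfam.1 hx, ?_⟩
        simp only [Finset.mem_union, Finset.mem_singleton]
        by_cases hx0 : x ∈ s0
        · have hxs' : x ∈ s' := Finset.inter_subset_left (hs0s hx0)
          have hxΓ : x ∉ Γ := (Finset.mem_sdiff.mp (hs'sub hxs')).2
          rintro (h | rfl)
          · exact hxΓ h
          · exact hus0 hx0
        · have hxDx : x ∈ Dx := hs0dx (Finset.mem_sdiff.mpr ⟨hx, hx0⟩)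
          rintro (h | rfl)
          · exact (Finset.disjoint_left.mp hdisj (hΓDn h)) hxDx
          · exact (Finset.disjoint_left.mp hdisj huDn) hxDx
      by_cases hut : u = t
      · exact hnQΓt (hut ▸ hQu)
      · have hmem : Γ ∪ {u} ∈ T := by
          simp only [hT, Finset.mem_filter, Finset.mem_powerset]
          refine ⟨Finset.union_subset hΓDn (Finset.singleton_subset_iff.mpr huDn),
            hΓ0Γ.trans Finset.subset_union_left, ?_, hQu⟩
          simp only [Finset.mem_union, Finset.mem_singleton]
          rintro (h | h)
          · exact htΓ h
          · exact hut h.symm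
        have hlt : Γ.card < (Γ ∪ {u}).card := by
          have : Γ ⊂ Γ ∪ {u} := Finset.ssubset_iff_of_subset Finset.subset_union_left
            |>.mpr ⟨u, by simp, huΓ⟩
          exact Finset.card_lt_card this
        exact absurd (hmax _ hmem) (not_le.mpr hlt)
  · rintro ⟨s, ⟨⟨hsDn, s', hs'Sfam, hss', hdx⟩, hmin⟩, hts⟩
    refine ⟨ht, Dn \ s, Finset.sdiff_subset, by simp [hts], ?_, ?_⟩
    · -- Q (D \ (Dn \ s))
      refine hmono ?_ hs'Sfam.2.1
      intro x hx
      rw [Finset.mem_sdiff]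
      refine ⟨hs'Sfam.1 hx, ?_⟩
      rw [Finset.mem_sdiff]
      by_cases hxs : x ∈ s
      · exact fun h => h.2 hxs
      · have hxDx : x ∈ Dx := hdx (Finset.mem_sdiff.mpr ⟨hx, hxs⟩)
        exact fun h => (Finset.disjoint_left.mp hdisj h.1) hxDx
    · -- ¬ Q (D \ (Dn \ s ∪ {t}))
      intro hQ'
      obtain ⟨s'', hs''Sfam, hs''sub⟩ := exists_sfam_subset D Q Finset.sdiff_subset hQ'
      have hs0 : (s'' ∩ Dn) ∈ SnPre D Dn Dx Q := by
        refine ⟨Finset.inter_subset_right, s'', hs''Sfam, Finset.inter_subset_left, ?_⟩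
        intro x hx
        rw [Finset.mem_sdiff, Finset.mem_inter] at hx
        have hxD : x ∈ D := hs''Sfam.1 hx.1
        rw [hpart, Finset.mem_union] at hxD
        rcases hxD with h | h
        · exact absurd ⟨hx.1, h⟩ hx.2
        · exact h
      have hsub : s'' ∩ Dn ⊆ s := by
        intro x hx
        rw [Finset.mem_inter] at hx
        have := hs''sub hx.1
        rw [Finset.mem_sdiff] at this
        simp only [Finset.mem_union, Finset.mem_singleton, Finset.mem_sdiff, not_or,
          not_and, not_not] at this
        exact this.2.1 hx.2
      have heq := hmin _ hs0 hsub
      have : t ∈ s'' ∩ Dn := heq ▸ hts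
      have := hs''sub (Finset.mem_inter.mp this).1
      rw [Finset.mem_sdiff] at this
      simp at this
end

section
/- Let D = Dⁿ ∪ Dˣ be a database instance, Q a monotone Boolean query, t ∈ Dⁿ, and Γ ⊆ Dⁿ with t ∉ Γ. Then t is an actual cause for Q with S-minimal contingency set Γ (i.e., Γ ∈ CT(t)) if and only if Γ ∪ {t} is an S-minimal hitting set for 𝔖ⁿ(D). (Proposition 6(a)) -/
open scoped Classical

variable {α : Type*} [DecidableEq α]

/-- Every set satisfying `P` contains a minimal subset satisfying `P`. -/
lemma exists_min_aux {P : Finset α → Prop} :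
    ∀ s : Finset α, P s → ∃ m, m ⊆ s ∧ P m ∧ ∀ m', m' ⊂ m → ¬ P m' := by
  intro s
  induction s using Finset.strongInductionOn with
  | _ s ih =>
    intro hs
    by_cases h : ∃ s', s' ⊂ s ∧ P s'
    · obtain ⟨s', hlt, hP⟩ := h
      obtain ⟨m, hm1, hm2, hm3⟩ := ih s' hlt hP
      exact ⟨m, hm1.trans hlt.subset, hm2, hm3⟩
    · exact ⟨s, Finset.Subset.refl s, hs, fun m' hlt hP => h ⟨m', hlt, hP⟩⟩

/-- For endogenous `H`, `H` is a hitting set for `𝔖ⁿ(D)` iff `Q (D \ H)` fails. -/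
lemma hittingSet_iff_not_Q (D Dn Dx : Finset α) (Q : Finset α → Prop)
    (hpart : D = Dn ∪ Dx) (hdisj : Disjoint Dn Dx) (hmono : MonotoneQuery Q)
    {H : Finset α} (hH : H ⊆ Dn) :
    IsHittingSet D Dn Dx Q H ↔ ¬ Q (D \ H) := by
  constructor
  · intro hhit hQ
    obtain ⟨s₀, hs₀sub, hs₀Q, hs₀min⟩ := exists_min_aux (P := Q) (D \ H) hQ
    have hs₀D : s₀ ⊆ D := hs₀sub.trans (Finset.sdiff_subset)
    have hs₀Sfam : s₀ ∈ Sfam D Q := ⟨hs₀D, hs₀Q, fun s' hs' => hs₀min s' hs'⟩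
    have hsPre : (s₀ ∩ Dn) ∈ SnPre D Dn Dx Q := by
      refine ⟨Finset.inter_subset_right, s₀, hs₀Sfam, Finset.inter_subset_left, ?_⟩
      intro x hx
      rw [Finset.mem_sdiff] at hx
      have hxD : x ∈ D := hs₀D hx.1
      rw [hpart, Finset.mem_union] at hxD
      rcases hxD with hxn | hxx
      · exact absurd (Finset.mem_inter.2 ⟨hx.1, hxn⟩) hx.2
      · exact hxx
    obtain ⟨m, hm1, hm2, hm3⟩ :=
      exists_min_aux (P := fun s => s ∈ SnPre D Dn Dx Q) (s₀ ∩ Dn) hsPre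
    have hmFam : m ∈ SnFam D Dn Dx Q := by
      refine ⟨hm2, fun s' hs' hsub => ?_⟩
      by_contra hne
      exact hm3 s' (Finset.ssubset_iff_subset_ne.2 ⟨hsub, hne⟩) hs'
    obtain ⟨x, hx⟩ := hhit.2 m hmFam
    rw [Finset.mem_inter] at hx
    have : x ∈ D \ H := hs₀sub (Finset.inter_subset_left (hm1 hx.2))
    rw [Finset.mem_sdiff] at this
    exact this.2 hx.1
  · intro hnQ
    refine ⟨hH, fun s hs => ?_⟩
    by_contra hemp
    rw [Finset.not_nonempty_iff_eq_empty] at hemp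
    obtain ⟨⟨hsDn, s', hs'Sfam, hss', hdiff⟩, _⟩ := hs
    apply hnQ
    apply hmono _ hs'Sfam.2.1
    intro x hx
    rw [Finset.mem_sdiff]
    refine ⟨hs'Sfam.1 hx, fun hxH => ?_⟩
    have hxDn : x ∈ Dn := hH hxH
    have hxs : x ∉ s := fun hxs =>
      (Finset.notMem_empty x) (hemp ▸ Finset.mem_inter.2 ⟨hxH, hxs⟩)
    have hxDx : x ∈ Dx := hdiff (Finset.mem_sdiff.2 ⟨hx, hxs⟩)
    exact (Finset.disjoint_left.1 hdisj) hxDn hxDx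

/-- Proposition 6(a): `Γ ∈ CT(t)` iff `Γ ∪ {t}` is an S-minimal hitting set
for `𝔖ⁿ(D)`. -/
theorem ct_iff_sminimal_hs (D Dn Dx : Finset α) (Q : Finset α → Prop)
    (hpart : D = Dn ∪ Dx) (hdisj : Disjoint Dn Dx) (hmono : MonotoneQuery Q)
    (t : α) (ht : t ∈ Dn) (Γ : Finset α) (hΓ : Γ ⊆ Dn) (htΓ : t ∉ Γ) :
    InCT D Dn Q t Γ ↔ IsSMinimalHittingSet D Dn Dx Q (Γ ∪ {t}) := by
  have hΓt : Γ ∪ {t} ⊆ Dn := Finset.union_subset hΓ (Finset.singleton_subset_iff.2 ht)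
  have hit := hittingSet_iff_not_Q D Dn Dx Q hpart hdisj hmono hΓt
  constructor
  · rintro ⟨⟨_, _, hQΓ, hnQ⟩, hmin⟩
    refine ⟨hit.2 hnQ, fun H' hH' hHit => ?_⟩
    have hH'Dn : H' ⊆ Dn := hH'.subset.trans hΓt
    rw [hittingSet_iff_not_Q D Dn Dx Q hpart hdisj hmono hH'Dn] at hHit
    apply hHit
    by_cases htH' : t ∈ H'
    · have hsub : H' \ {t} ⊆ Γ := by
        intro x hx
        rw [Finset.mem_sdiff, Finset.mem_singleton] at hx
        rcases Finset.mem_union.1 (hH'.subset hx.1) with h | h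
        · exact h
        · exact absurd (Finset.mem_singleton.1 h) hx.2
      have hss : H' \ {t} ⊂ Γ := by
        refine Finset.ssubset_iff_subset_ne.2 ⟨hsub, fun heq => ?_⟩
        apply hH'.ne
        have : (H' \ {t}) ∪ {t} = H' := by
          ext x
          simp only [Finset.mem_union, Finset.mem_sdiff, Finset.mem_singleton]
          constructor
          · rintro (⟨h, _⟩ | h)
            · exact h
            · exact h ▸ htH'
          · intro h
            by_cases hxt : x = t
            · exact Or.inr hxt
            · exact Or.inl ⟨h, hxt⟩
        rw [← this, heq]
      have := hmin (H' \ {t}) hss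
      have heq : (H' \ {t}) ∪ {t} = H' := by
        ext x
        simp only [Finset.mem_union, Finset.mem_sdiff, Finset.mem_singleton]
        constructor
        · rintro (⟨h, _⟩ | h)
          · exact h
          · exact h ▸ htH'
        · intro h
          by_cases hxt : x = t
          · exact Or.inr hxt
          · exact Or.inl ⟨h, hxt⟩
      rwa [heq] at this
    · have hsub : H' ⊆ Γ := by
        intro x hx
        rcases Finset.mem_union.1 (hH'.subset hx) with h | h
        · exact h
        · exact absurd (Finset.mem_singleton.1 h ▸ hx) htH'
      exact hmono (Finset.sdiff_subset_sdiff (Finset.Subset.refl D) hsub) hQΓ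
  · rintro ⟨hHit, hmin⟩
    have hnQ : ¬ Q (D \ (Γ ∪ {t})) := hit.1 hHit
    have hΓss : Γ ⊂ Γ ∪ {t} := by
      refine Finset.ssubset_iff_subset_ne.2 ⟨Finset.subset_union_left, fun heq => ?_⟩
      exact htΓ (heq ▸ Finset.mem_union_right Γ (Finset.mem_singleton_self t))
    have hQΓ : Q (D \ Γ) := by
      by_contra h
      exact hmin Γ hΓss ((hittingSet_iff_not_Q D Dn Dx Q hpart hdisj hmono hΓ).2 h)
    refine ⟨⟨hΓ, htΓ, hQΓ, hnQ⟩, fun Γ'' hΓ'' => ?_⟩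
    have hsub : Γ'' ∪ {t} ⊂ Γ ∪ {t} := by
      obtain ⟨x, hxΓ, hxΓ''⟩ := Finset.exists_of_ssubset hΓ''
      refine Finset.ssubset_iff_of_subset
        (Finset.union_subset_union hΓ''.subset (Finset.Subset.refl _)) |>.2 ?_
      refine ⟨x, Finset.mem_union_left _ hxΓ, fun hx => ?_⟩
      rcases Finset.mem_union.1 hx with h | h
      · exact hxΓ'' h
      · exact htΓ (Finset.mem_singleton.1 h ▸ hxΓ)
    have hΓ''Dn : Γ'' ∪ {t} ⊆ Dn := hsub.subset.trans hΓt
    have := hmin (Γ'' ∪ {t}) hsub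
    rw [hittingSet_iff_not_Q D Dn Dx Q hpart hdisj hmono hΓ''Dn, not_not] at this
    exact this
end

section
/- Let D be a database instance in which all tuples are endogenous and Q a monotone Boolean query. For every tuple t that is an actual cause for Q, there exists an S-repair D' of D with respect to ¬Q such that t ∉ D'. (Corollary 3(a)) -/
open scoped Classical

variable {α : Type*} [DecidableEq α]

/-- Corollary 3(a): every actual cause is excluded from some S-repair. -/
theorem cause_excluded_from_some_srepair (D : Finset α) (Q : Finset α → Prop)
    (hmono : MonotoneQuery Q) (t : α) (hc : IsActualCause D D Q t) :
    ∃ D' : Finset α, IsSRepair D Q D' ∧ t ∉ D' := by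
  obtain ⟨htD, Γ, hΓD, htΓ, hQ, hnQ⟩ := hc
  set B := D \ (Γ ∪ {t}) with hB
  set F := D.powerset.filter (fun S => B ⊆ S ∧ ¬ Q S) with hF
  have hBF : B ∈ F := by
    simp only [hF, Finset.mem_filter, Finset.mem_powerset]
    exact ⟨Finset.sdiff_subset, subset_rfl, hnQ⟩
  obtain ⟨S, hSF, hmax⟩ := F.exists_max_image Finset.card ⟨B, hBF⟩
  simp only [hF, Finset.mem_filter, Finset.mem_powerset] at hSF
  obtain ⟨hSD, hBS, hnQS⟩ := hSF
  have htS : t ∉ S := by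
    intro htS
    apply hnQS
    apply hmono (Y := S) _ hQ
    intro x hx
    rcases Finset.mem_sdiff.mp hx with ⟨hxD, hxΓ⟩
    by_cases hxt : x = t
    · exact hxt ▸ htS
    · exact hBS (Finset.mem_sdiff.mpr ⟨hxD, by simp [hxΓ, hxt]⟩)
  refine ⟨S, ⟨hSD, hnQS, ?_⟩, htS⟩
  intro D'' hD'' hnQ'' hSD''
  have hD''F : D'' ∈ F := by
    simp only [hF, Finset.mem_filter, Finset.mem_powerset]
    exact ⟨hD'', hBS.trans hSD'', hnQ''⟩
  exact Finset.eq_of_subset_of_card_le hSD'' (hmax D'' hD''F) |>.symm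
end

section
/- Let D be a database instance in which all tuples are endogenous and Q a monotone Boolean query. For every tuple t that is a most responsible actual cause for Q, there exists a C-repair D' of D with respect to ¬Q such that t ∉ D'. (Corollary 3(b)) -/
open scoped Classical

variable {α : Type*} [DecidableEq α]

/-- Corollary 3(b): every most responsible actual cause is excluded from
some C-repair. -/
theorem mrc_excluded_from_some_crepair (D : Finset α) (Q : Finset α → Prop)
    (hmono : MonotoneQuery Q) (t : α) (hc : IsMostResponsibleCause D D Q t) :
    ∃ D' : Finset α, IsCRepair D Q D' ∧ t ∉ D' := by
  classical
  obtain ⟨hac, hmr⟩ := hc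
  obtain ⟨htD, Γ0, hΓ0⟩ := hac
  have hne : (minContingency D D Q t) ∈
      {m : ℕ | ∃ Γ : Finset α, IsContingency D D Q t Γ ∧ Γ.card = m} :=
    Nat.sInf_mem ⟨Γ0.card, Γ0, hΓ0, rfl⟩
  obtain ⟨Γ, hΓ, hΓcard⟩ := hne
  set m := minContingency D D Q t with hm
  obtain ⟨hΓsub, htΓ, hQΓ, hnQΓt⟩ := hΓ
  have hQD : Q D := hmono (Finset.sdiff_subset) hQΓ
  set E := D \ (Γ ∪ {t}) with hE
  have hΓtsub : Γ ∪ {t} ⊆ D := by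
    intro x hx
    rcases Finset.mem_union.1 hx with h | h
    · exact hΓsub h
    · simp only [Finset.mem_singleton] at h; subst h; exact htD
  have hEcard : E.card = D.card - (m + 1) := by
    rw [hE, Finset.card_sdiff_of_subset hΓtsub, Finset.card_union_of_disjoint
      (by simpa using htΓ), Finset.card_singleton, hΓcard]
  have htE : t ∉ E := by simp [hE]
  have hEsub : E ⊆ D := Finset.sdiff_subset
  -- the set of falsifying subsets
  set S := D.powerset.filter (fun s => ¬ Q s) with hS
  have hES : E ∈ S := by
    simp only [hS, Finset.mem_filter, Finset.mem_powerset]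
    exact ⟨hEsub, hnQΓt⟩
  obtain ⟨M, hMS, hMmax⟩ := S.exists_max_image Finset.card ⟨E, hES⟩
  simp only [hS, Finset.mem_filter, Finset.mem_powerset] at hMS
  obtain ⟨hMsub, hnQM⟩ := hMS
  have hMne : M ≠ D := fun h => hnQM (h ▸ hQD)
  obtain ⟨t', ht'D, ht'M⟩ := Finset.exists_of_ssubset (lt_of_le_of_ne hMsub hMne)
  -- Γ' is a contingency set for t'
  set Γ' := (D \ M).erase t' with hΓ'
  have hDM : D \ (D \ M) = M := by
    ext x; simp only [Finset.mem_sdiff]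
    constructor
    · rintro ⟨hx, h⟩; by_contra hxM; exact h ⟨hx, hxM⟩
    · intro h; exact ⟨hMsub h, fun h' => h'.2 h⟩
  have hDΓ' : D \ Γ' = insert t' M := by
    ext x
    simp only [hΓ', Finset.mem_sdiff, Finset.mem_erase, Finset.mem_insert]
    constructor
    · rintro ⟨hx, h⟩
      by_cases hxt : x = t'
      · exact Or.inl hxt
      · right; by_contra hxM; exact h ⟨hxt, hx, hxM⟩
    · rintro (rfl | hxM)
      · exact ⟨ht'D, fun h => h.1 rfl⟩
      · exact ⟨hMsub hxM, fun h => h.2.2 hxM⟩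
  have hQins : Q (insert t' M) := by
    by_contra hnQ
    have hins : insert t' M ∈ S := by
      simp only [hS, Finset.mem_filter, Finset.mem_powerset]
      exact ⟨Finset.insert_subset ht'D hMsub, hnQ⟩
    have := hMmax _ hins
    rw [Finset.card_insert_of_notMem ht'M] at this
    omega
  have hΓ't' : Γ' ∪ {t'} = D \ M := by
    rw [hΓ']
    ext x
    simp only [Finset.mem_union, Finset.mem_erase, Finset.mem_singleton, Finset.mem_sdiff]
    constructor
    · rintro (⟨_, h⟩ | rfl)
      · exact h
      · exact ⟨ht'D, ht'M⟩
    · intro h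
      by_cases hxt : x = t'
      · exact Or.inr hxt
      · exact Or.inl ⟨hxt, h⟩
  have hcont : IsContingency D D Q t' Γ' := by
    refine ⟨?_, by simp [hΓ'], ?_, ?_⟩
    · exact fun x hx => (Finset.mem_sdiff.1 (Finset.erase_subset _ _ hx)).1
    · rw [hDΓ']; exact hQins
    · rw [hΓ't', hDM]; exact hnQM
  have hac' : IsActualCause D D Q t' := ⟨ht'D, Γ', hcont⟩
  -- responsibility comparison
  set m' := minContingency D D Q t' with hm'
  have hm'le : m' ≤ Γ'.card := Nat.sInf_le ⟨Γ', hcont, rfl⟩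
  have hΓ'card : Γ'.card = (D \ M).card - 1 := by
    rw [hΓ', Finset.card_erase_of_mem (Finset.mem_sdiff.2 ⟨ht'D, ht'M⟩)]
  have hresp := hmr t'
  rw [resp, resp, if_pos ⟨htD, Γ, hΓsub, htΓ, hQΓ, hnQΓt⟩, if_pos hac'] at hresp
  push_neg at hresp
  have hden : (0:ℚ) < 1 + (m':ℚ) := by positivity
  have hden2 : (0:ℚ) < 1 + (m:ℚ) := by positivity
  have hmm' : m ≤ m' := by
    rw [div_le_div_iff₀ hden hden2] at hresp
    have : (m:ℚ) ≤ (m':ℚ) := by linarith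
    exact_mod_cast this
  have hDMcard : (D \ M).card + M.card = D.card :=
    Finset.card_sdiff_add_card_eq_card hMsub
  have hDMpos : 0 < (D \ M).card :=
    Finset.card_pos.2 ⟨t', Finset.mem_sdiff.2 ⟨ht'D, ht'M⟩⟩
  have hkey : m + 1 ≤ (D \ M).card := by omega
  refine ⟨E, ⟨hEsub, hnQΓt, ?_⟩, htE⟩
  intro D'' hD''sub hnQD''
  have hD''S : D'' ∈ S := by
    simp only [hS, Finset.mem_filter, Finset.mem_powerset]; exact ⟨hD''sub, hnQD''⟩
  have h1 := hMmax _ hD''S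
  have hMD : M.card ≤ D.card := Finset.card_le_card hMsub
  omega
end

section
/- Let D be a database instance in which all tuples are endogenous and Q a monotone Boolean query. For every S-repair D' of D with respect to ¬Q, every tuple in D \ D' is an actual cause for Q; and for every C-repair D'' of D with respect to ¬Q, every tuple in D \ D'' is a most responsible actual cause for Q. (Corollary 3(c)) -/
open scoped Classical

variable {α : Type*} [DecidableEq α]

/-- Corollary 3(c): tuples removed by S-repairs are actual causes; tuples
removed by C-repairs are most responsible actual causes. -/
theorem removed_tuples_are_causes (D : Finset α) (Q : Finset α → Prop)
    (hmono : MonotoneQuery Q) :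
    (∀ D' : Finset α, IsSRepair D Q D' → ∀ t ∈ D \ D', IsActualCause D D Q t) ∧
    (∀ D'' : Finset α, IsCRepair D Q D'' → ∀ t ∈ D \ D'',
      IsMostResponsibleCause D D Q t) := by
  -- common set identities
  have hset1 : ∀ (E : Finset α), E ⊆ D → ∀ t, t ∈ D → t ∉ E →
      D \ ((D \ E) \ {t}) = insert t E := by
    intro E hE t htD htE
    ext x
    simp only [Finset.mem_sdiff, Finset.mem_singleton, Finset.mem_insert]
    constructor
    · rintro ⟨hx, h⟩
      by_cases hxE : x ∈ E
      · exact Or.inr hxE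
      · by_cases hxt : x = t
        · exact Or.inl hxt
        · exact absurd ⟨⟨hx, hxE⟩, hxt⟩ h
    · rintro (rfl | hx)
      · exact ⟨htD, fun h => h.2 rfl⟩
      · exact ⟨hE hx, fun h => absurd hx h.1.2⟩
  have hset2 : ∀ (E : Finset α), E ⊆ D → ∀ t, t ∈ D → t ∉ E →
      D \ (((D \ E) \ {t}) ∪ {t}) = E := by
    intro E hE t htD htE
    have : ((D \ E) \ {t}) ∪ {t} = D \ E := by
      ext x
      simp only [Finset.mem_union, Finset.mem_sdiff, Finset.mem_singleton]
      constructor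
      · rintro (⟨h, _⟩ | rfl)
        · exact h
        · exact ⟨htD, htE⟩
      · intro h
        by_cases hx : x = t
        · exact Or.inr hx
        · exact Or.inl ⟨h, hx⟩
    rw [this, Finset.sdiff_sdiff_eq_self hE]
  constructor
  · rintro D' ⟨hsub, hnQ, hmax⟩ t ht
    obtain ⟨htD, htD'⟩ := Finset.mem_sdiff.mp ht
    refine ⟨htD, (D \ D') \ {t}, Finset.sdiff_subset.trans Finset.sdiff_subset,
      by simp, ?_, ?_⟩
    · rw [hset1 D' hsub t htD htD']
      by_contra hq
      have := hmax (insert t D') (Finset.insert_subset htD hsub) hq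
        (Finset.subset_insert _ _)
      exact htD' (this ▸ Finset.mem_insert_self t D')
    · rw [hset2 D' hsub t htD htD']
      exact hnQ
  · rintro D'' ⟨hsub, hnQ, hmax⟩ t ht
    obtain ⟨htD, htD'⟩ := Finset.mem_sdiff.mp ht
    set k := (D \ D'').card with hk
    have hk1 : 1 ≤ k := Finset.card_pos.mpr ⟨t, ht⟩
    -- key cardinality bound: any contingency set for any tuple has card ≥ k - 1
    have keyA : ∀ (t' : α) (Γ' : Finset α), Γ' ⊆ D → t' ∈ D →
        ¬ Q (D \ (Γ' ∪ {t'})) → k ≤ Γ'.card + 1 := by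
      intro t' Γ' hΓ' ht' hnq
      have hu : Γ' ∪ {t'} ⊆ D :=
        Finset.union_subset hΓ' (by simpa using ht')
      have h1 : (D \ (Γ' ∪ {t'})).card ≤ D''.card :=
        hmax _ Finset.sdiff_subset hnq
      have h2 : (D \ (Γ' ∪ {t'})).card = D.card - (Γ' ∪ {t'}).card :=
        Finset.card_sdiff_of_subset hu
      have h3 : (Γ' ∪ {t'}).card ≤ Γ'.card + 1 := by
        simpa using Finset.card_union_le Γ' {t'}
      have h5 : (Γ' ∪ {t'}).card ≤ D.card := Finset.card_le_card hu
      have h4 : k = D.card - D''.card := by rw [hk, Finset.card_sdiff_of_subset hsub]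
      omega
    -- t is an actual cause with the specific contingency set
    have hΓcont : IsContingency D D Q t ((D \ D'') \ {t}) := by
      refine ⟨Finset.sdiff_subset.trans Finset.sdiff_subset, by simp, ?_, ?_⟩
      · rw [hset1 D'' hsub t htD htD']
        by_contra hq
        have hcard := hmax (insert t D'') (Finset.insert_subset htD hsub) hq
        rw [Finset.card_insert_of_notMem htD'] at hcard
        omega
      · rw [hset2 D'' hsub t htD htD']
        exact hnQ
    have hΓcard : ((D \ D'') \ {t}).card = k - 1 := by
      rw [Finset.card_sdiff_of_subset (by simpa using ht)]
      simp [hk]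
    have hcause : IsActualCause D D Q t := ⟨htD, _, hΓcont⟩
    refine ⟨hcause, ?_⟩
    -- compute minContingency for t
    have hne : {m : ℕ | ∃ Γ : Finset α, IsContingency D D Q t Γ ∧ Γ.card = m}.Nonempty :=
      ⟨k - 1, _, hΓcont, hΓcard⟩
    have hbound : ∀ m ∈ {m : ℕ | ∃ Γ : Finset α, IsContingency D D Q t Γ ∧ Γ.card = m},
        k - 1 ≤ m := by
      rintro m ⟨Γ', ⟨hΓ'sub, _, _, hnq⟩, rfl⟩
      have := keyA t Γ' hΓ'sub htD hnq
      omega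
    have hmin : minContingency D D Q t = k - 1 := by
      refine le_antisymm (Nat.sInf_le ⟨_, hΓcont, hΓcard⟩) ?_
      exact hbound _ (Nat.sInf_mem hne)
    have hrespt : resp D D Q t = 1 / (k : ℚ) := by
      rw [resp, if_pos hcause, hmin]
      have : (1 : ℚ) + ((k - 1 : ℕ) : ℚ) = (k : ℚ) := by
        have : ((k - 1 : ℕ) : ℚ) = (k : ℚ) - 1 := by
          push_cast [Nat.cast_sub hk1]; ring
        rw [this]; ring
      rw [this]
    intro t'
    by_cases hc : IsActualCause D D Q t'
    · -- minContingency t' ≥ k - 1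
      obtain ⟨ht'D, Γ', hΓ'⟩ := hc
      have hne' : {m : ℕ | ∃ Γ : Finset α, IsContingency D D Q t' Γ ∧ Γ.card = m}.Nonempty :=
        ⟨Γ'.card, Γ', hΓ', rfl⟩
      obtain ⟨Γ₀, hΓ₀, hΓ₀card⟩ := Nat.sInf_mem hne'
      have hm' : k - 1 ≤ minContingency D D Q t' := by
        obtain ⟨hsub₀, _, _, hnq₀⟩ := hΓ₀
        have := keyA t' Γ₀ hsub₀ ht'D hnq₀
        rw [minContingency, ← hΓ₀card] at *
        omega
      have hrespt' : resp D D Q t' = 1 / (1 + (minContingency D D Q t' : ℚ)) := by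
        rw [resp, if_pos ⟨ht'D, Γ', hΓ'⟩]
      rw [hrespt, hrespt']
      have hkpos : (0 : ℚ) < k := by exact_mod_cast hk1
      have hle : (k : ℚ) ≤ 1 + (minContingency D D Q t' : ℚ) := by
        have : (k : ℚ) ≤ 1 + ((k - 1 : ℕ) : ℚ) := by
          rw [Nat.cast_sub hk1]; push_cast; ring_nf; simp
        refine this.trans ?_
        have : ((k - 1 : ℕ) : ℚ) ≤ (minContingency D D Q t' : ℚ) := by
          exact_mod_cast hm'
        linarith
      exact not_lt.mpr (one_div_le_one_div_of_le hkpos hle)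
    · rw [hrespt, resp, if_neg hc]
      have hkpos : (0 : ℚ) < k := by exact_mod_cast hk1
      exact not_lt.mpr (by positivity)
end

section
/- Let D be a database instance in which all tuples are endogenous and Q a monotone Boolean query with ¬Q ∅ (the empty instance satisfies the denial constraint). For every finite set T of tuples (the ground atoms of a projection-free conjunctive query answer): T is contained in every S-repair of D with respect to ¬Q if and only if T ⊆ D and no element of T is an actual cause for Q. (Proposition 'cqa' (a)) -/
open scoped Classical

variable {α : Type*} [DecidableEq α]

private lemma extend_repair {α : Type*} [DecidableEq α] (D : Finset α) (Q : Finset α → Prop)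
    (E : Finset α) (hE : E ⊆ D) (hQE : ¬ Q E) :
    ∃ D' : Finset α, IsSRepair D Q D' ∧ E ⊆ D' := by
  classical
  set S : Finset (Finset α) := D.powerset.filter (fun F => ¬ Q F ∧ E ⊆ F) with hS
  have hmem : ∀ F, F ∈ S ↔ F ⊆ D ∧ ¬ Q F ∧ E ⊆ F := by
    intro F; simp [hS, Finset.mem_powerset]
  have hne : S.Nonempty := ⟨E, (hmem E).2 ⟨hE, hQE, subset_rfl⟩⟩
  obtain ⟨F, hF, hmax⟩ := S.exists_max_image Finset.card hne
  obtain ⟨hFD, hQF, hEF⟩ := (hmem F).1 hF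
  refine ⟨F, ⟨hFD, hQF, ?_⟩, hEF⟩
  intro D'' hD'' hQ'' hsub
  have : D'' ∈ S := (hmem D'').2 ⟨hD'', hQ'', hEF.trans hsub⟩
  exact (Finset.eq_of_subset_of_card_le hsub (hmax _ this)).symm

/-- Proposition `cqa`(a): `T` is contained in every S-repair iff `T ⊆ D` and
no element of `T` is an actual cause for `Q`. -/
theorem sconsistent_iff_no_cause (D : Finset α) (Q : Finset α → Prop)
    (hmono : MonotoneQuery Q) (hQempty : ¬ Q ∅) (T : Finset α) :
    (∀ D' : Finset α, IsSRepair D Q D' → T ⊆ D') ↔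
      (T ⊆ D ∧ ∀ t ∈ T, ¬ IsActualCause D D Q t) := by
  classical
  constructor
  · intro h
    obtain ⟨R, hR, hER⟩ := extend_repair D Q ∅ (Finset.empty_subset D) hQempty
    have hTD : T ⊆ D := (h R hR).trans hR.1
    refine ⟨hTD, ?_⟩
    intro t htT ⟨htD, Γ, hΓD, htΓ, hQdel, hQdel'⟩
    obtain ⟨R, hR, hER⟩ := extend_repair D Q (D \ (Γ ∪ {t}))
      (Finset.sdiff_subset) hQdel'
    have htR : t ∈ R := h R hR htT
    have hsub : D \ Γ ⊆ R := by
      intro x hx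
      rcases Finset.mem_sdiff.1 hx with ⟨hxD, hxΓ⟩
      by_cases hxt : x = t
      · subst hxt; exact htR
      · exact hER (Finset.mem_sdiff.2 ⟨hxD, by
          simp [Finset.mem_union, hxΓ, hxt]⟩)
    exact hR.2.1 (hmono hsub hQdel)
  · rintro ⟨hTD, hnc⟩ D' hD' t htT
    by_contra htD'
    have htD : t ∈ D := hTD htT
    have hsubD : D' ∪ {t} ⊆ D := Finset.union_subset hD'.1 (by simpa using htD)
    have hQins : Q (D' ∪ {t}) := by
      by_contra hq
      have := hD'.2.2 (D' ∪ {t}) hsubD hq Finset.subset_union_left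
      exact htD' (this ▸ Finset.mem_union_right _ (Finset.mem_singleton_self t))
    refine hnc t htT ⟨htD, D \ (D' ∪ {t}), Finset.sdiff_subset, ?_, ?_, ?_⟩
    · simp [htD]
    · have : D \ (D \ (D' ∪ {t})) = D' ∪ {t} := Finset.sdiff_sdiff_eq_self hsubD
      rw [this]; exact hQins
    · have h1 : D \ (D \ (D' ∪ {t}) ∪ {t}) = D' \ {t} := by
        ext x
        have hx : x ∈ D' → x ∈ D := fun h => hD'.1 h
        simp only [Finset.mem_sdiff, Finset.mem_union, Finset.mem_singleton]
        tauto
      rw [h1, Finset.sdiff_singleton_eq_erase, Finset.erase_eq_of_notMem htD']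
      exact hD'.2.1
end

section
/- Let D be a database instance in which all tuples are endogenous and Q a monotone Boolean query with ¬Q ∅ (the empty instance satisfies the denial constraint). For every finite set T of tuples (the ground atoms of a projection-free conjunctive query answer): T is contained in every C-repair of D with respect to ¬Q if and only if T ⊆ D and no element of T is a most responsible actual cause for Q. (Proposition 'cqa' (b)) -/
open scoped Classical

variable {α : Type*} [DecidableEq α]

lemma exists_crepair_aux (D : Finset α) (Q : Finset α → Prop) (hQempty : ¬ Q ∅) :
    ∃ D' : Finset α, IsCRepair D Q D' := by
  classical
  have hne : (D.powerset.filter (fun X => ¬ Q X)).Nonempty := by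
    refine ⟨∅, ?_⟩
    simp [hQempty]
  obtain ⟨D', hD', hmax⟩ := Finset.exists_max_image _ Finset.card hne
  simp only [Finset.mem_filter, Finset.mem_powerset] at hD'
  refine ⟨D', hD'.1, hD'.2, fun D'' hsub hnq => ?_⟩
  exact hmax D'' (by simp [Finset.mem_filter, Finset.mem_powerset, hsub, hnq])

lemma exists_min_diag (D : Finset α) (Q : Finset α → Prop) :
    ∀ Δ : Finset α, ¬ Q (D \ Δ) →
      ∃ Δ₀, Δ₀ ⊆ Δ ∧ ¬ Q (D \ Δ₀) ∧ ∀ Δ' : Finset α, Δ' ⊂ Δ₀ → Q (D \ Δ') := by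
  classical
  intro Δ
  induction Δ using Finset.strongInduction with
  | _ Δ ih =>
    intro hΔ
    by_cases h : ∀ Δ' : Finset α, Δ' ⊂ Δ → Q (D \ Δ')
    · exact ⟨Δ, subset_rfl, hΔ, h⟩
    · push_neg at h
      obtain ⟨Δ', hss, hnq⟩ := h
      obtain ⟨Δ₀, h1, h2, h3⟩ := ih Δ' hss hnq
      exact ⟨Δ₀, h1.trans hss.subset, h2, h3⟩

lemma min_contingency_le (D : Finset α) (Q : Finset α → Prop) (t : α) (Γ : Finset α)
    (h : IsContingency D D Q t Γ) : minContingency D D Q t ≤ Γ.card :=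
  Nat.sInf_le ⟨Γ, h, rfl⟩

lemma min_contingency_witness (D : Finset α) (Q : Finset α → Prop) (t : α)
    (h : IsActualCause D D Q t) :
    ∃ Γ : Finset α, IsContingency D D Q t Γ ∧ Γ.card = minContingency D D Q t := by
  obtain ⟨_, Γ, hΓ⟩ := h
  have : minContingency D D Q t ∈
      {m : ℕ | ∃ Γ : Finset α, IsContingency D D Q t Γ ∧ Γ.card = m} :=
    Nat.sInf_mem ⟨Γ.card, Γ, hΓ, rfl⟩
  exact this

/-- Proposition `cqa`(b): `T` is contained in every C-repair iff `T ⊆ D` and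
no element of `T` is a most responsible actual cause for `Q`. -/
theorem cconsistent_iff_no_mrc (D : Finset α) (Q : Finset α → Prop)
    (hmono : MonotoneQuery Q) (hQempty : ¬ Q ∅) (T : Finset α) :
    (∀ D' : Finset α, IsCRepair D Q D' → T ⊆ D') ↔
      (T ⊆ D ∧ ∀ t ∈ T, ¬ IsMostResponsibleCause D D Q t) := by
  classical
  constructor
  · intro hall
    obtain ⟨D₀, hD₀⟩ := exists_crepair_aux D Q hQempty
    have hTD : T ⊆ D := (hall D₀ hD₀).trans hD₀.1
    refine ⟨hTD, fun t ht hmrc => ?_⟩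
    obtain ⟨hAC, hbest⟩ := hmrc
    have htD : t ∈ D := hAC.1
    obtain ⟨Γ, hΓ, hΓcard⟩ := min_contingency_witness D Q t hAC
    obtain ⟨hΓD, htΓ, hQDΓ, hnQ⟩ := hΓ
    have hQD : Q D := hmono (Finset.sdiff_subset) hQDΓ
    -- the candidate C-repair
    set D' : Finset α := D \ (Γ ∪ {t}) with hD'def
    have hsubD : Γ ∪ {t} ⊆ D := by
      intro x hx
      rcases Finset.mem_union.1 hx with h | h
      · exact hΓD h
      · simp only [Finset.mem_singleton] at h; exact h ▸ htD
    have hcardU : (Γ ∪ {t}).card = Γ.card + 1 := by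
      rw [Finset.union_comm, ← Finset.insert_eq, Finset.card_insert_of_notMem htΓ]
    have hcardD' : D'.card = D.card - (Γ.card + 1) := by
      rw [hD'def, Finset.card_sdiff_of_subset hsubD, hcardU]
    have hrepair : IsCRepair D Q D' := by
      refine ⟨Finset.sdiff_subset, hnQ, fun D'' hsub hnq => ?_⟩
      by_contra hlt
      push_neg at hlt
      -- Δ := D \ D'' is a diagnosis of size ≤ Γ.card
      have hΔnq : ¬ Q (D \ (D \ D'')) := by
        rwa [Finset.sdiff_sdiff_self_left,
          Finset.inter_eq_right.2 hsub]
      have hΔcard : (D \ D'').card ≤ Γ.card := by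
        have h1 : (D \ D'').card = D.card - D''.card := Finset.card_sdiff_of_subset hsub
        have h2 : D''.card ≤ D.card := Finset.card_le_card hsub
        have h3 : Γ.card + 1 ≤ D.card := by
          have := Finset.card_le_card hsubD
          omega
        omega
      obtain ⟨Δ₀, hΔ₀sub, hΔ₀nq, hΔ₀min⟩ := exists_min_diag D Q _ hΔnq
      have hΔ₀ne : Δ₀.Nonempty := by
        rcases Finset.eq_empty_or_nonempty Δ₀ with h | h
        · exfalso; rw [h, Finset.sdiff_empty] at hΔ₀nq; exact hΔ₀nq hQD
        · exact h
      obtain ⟨t', ht'⟩ := hΔ₀ne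
      have ht'D : t' ∈ D := (hΔ₀sub.trans Finset.sdiff_subset) ht'
      have hΓ' : IsContingency D D Q t' (Δ₀.erase t') := by
        refine ⟨(Finset.erase_subset _ _).trans
          (hΔ₀sub.trans Finset.sdiff_subset), Finset.notMem_erase _ _, ?_, ?_⟩
        · exact hΔ₀min _ (Finset.erase_ssubset ht')
        · rwa [Finset.union_comm, ← Finset.insert_eq, Finset.insert_erase ht']
      have hlt' : minContingency D D Q t' < minContingency D D Q t := by
        have h1 := min_contingency_le D Q t' _ hΓ'
        have h2 : (Δ₀.erase t').card = Δ₀.card - 1 := Finset.card_erase_of_mem ht'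
        have h3 : Δ₀.card ≤ Γ.card := le_trans (Finset.card_le_card hΔ₀sub) hΔcard
        have h4 : 1 ≤ Δ₀.card := Finset.card_pos.2 ⟨t', ht'⟩
        omega
      have hAC' : IsActualCause D D Q t' := ⟨ht'D, _, hΓ'⟩
      have : resp D D Q t < resp D D Q t' := by
        rw [resp, resp, if_pos hAC, if_pos hAC']
        apply one_div_lt_one_div_of_lt
        · positivity
        · have : (minContingency D D Q t' : ℚ) < minContingency D D Q t := by
            exact_mod_cast hlt'
          linarith
      exact hbest t' this
    have := hall D' hrepair ht
    rw [hD'def] at this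
    exact (Finset.mem_sdiff.1 this).2 (Finset.mem_union_right _ (Finset.mem_singleton_self t))
  · rintro ⟨hTD, hnomrc⟩ D' hrep t' ht'
    by_contra htD'
    have htD : t' ∈ D := hTD ht'
    obtain ⟨hsub, hnq, hmax⟩ := hrep
    by_cases hQD : Q D
    · -- t' is a most responsible cause: contradiction
      apply hnomrc t' ht'
      have htmem : t' ∈ D \ D' := Finset.mem_sdiff.2 ⟨htD, htD'⟩
      set Γ : Finset α := (D \ D').erase t' with hΓdef
      have hkey : D \ Γ = insert t' D' := by
        ext x
        simp only [hΓdef, Finset.mem_sdiff, Finset.mem_erase, Finset.mem_insert]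
        constructor
        · rintro ⟨hxD, hx⟩
          by_cases hxt : x = t'
          · exact Or.inl hxt
          · right
            by_contra hxD'
            exact hx ⟨hxt, hxD, hxD'⟩
        · rintro (rfl | hxD')
          · exact ⟨htD, fun h => h.1 rfl⟩
          · exact ⟨hsub hxD', fun h => h.2.2 hxD'⟩
      have hQins : Q (insert t' D') := by
        by_contra hnq'
        have := hmax (insert t' D') (Finset.insert_subset htD hsub) hnq'
        rw [Finset.card_insert_of_notMem htD'] at this
        omega
      have hΓcont : IsContingency D D Q t' Γ := by
        refine ⟨(Finset.erase_subset _ _).trans Finset.sdiff_subset,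
          Finset.notMem_erase _ _, by rwa [hkey], ?_⟩
        rw [Finset.union_comm, ← Finset.insert_eq, hΓdef,
          Finset.insert_erase htmem, Finset.sdiff_sdiff_self_left,
          Finset.inter_eq_right.2 hsub]
        exact hnq
      have hAC : IsActualCause D D Q t' := ⟨htD, Γ, hΓcont⟩
      refine ⟨hAC, fun t'' hlt => ?_⟩
      -- show resp t'' ≤ resp t'
      have hle : resp D D Q t'' ≤ resp D D Q t' := by
        by_cases hAC'' : IsActualCause D D Q t''
        · obtain ⟨Γ'', hΓ'', hc''⟩ := min_contingency_witness D Q t'' hAC''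
          obtain ⟨hΓ''D, ht''Γ, hQ'', hnQ''⟩ := hΓ''
          have ht''D : t'' ∈ D := hAC''.1
          have hsubU : Γ'' ∪ {t''} ⊆ D := by
            intro x hx
            rcases Finset.mem_union.1 hx with h | h
            · exact hΓ''D h
            · simp only [Finset.mem_singleton] at h; exact h ▸ ht''D
          -- card bound from C-repair maximality
          have hcb := hmax _ (Finset.sdiff_subset (s := D) (t := Γ'' ∪ {t''})) hnQ''
          have hcardU : (Γ'' ∪ {t''}).card = Γ''.card + 1 := by
            rw [Finset.union_comm, ← Finset.insert_eq,
              Finset.card_insert_of_notMem ht''Γ]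
          have hc1 : D.card - (Γ''.card + 1) ≤ D'.card := by
            rwa [Finset.card_sdiff_of_subset hsubU, hcardU] at hcb
          have hc2 : Γ.card = (D \ D').card - 1 := Finset.card_erase_of_mem htmem
          have hc3 : (D \ D').card = D.card - D'.card := Finset.card_sdiff_of_subset hsub
          have hc4 : D'.card < D.card := Finset.card_lt_card ⟨hsub, fun h => htD' (h htD)⟩
          have hc5 : minContingency D D Q t' ≤ Γ.card := min_contingency_le D Q t' Γ hΓcont
          have hc6 : Γ''.card + 1 ≤ D.card := by
            have := Finset.card_le_card hsubU; omega
          have hmm : minContingency D D Q t' ≤ minContingency D D Q t'' := by omega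
          rw [resp, resp, if_pos hAC, if_pos hAC'']
          apply one_div_le_one_div_of_le
          · positivity
          · have : (minContingency D D Q t' : ℚ) ≤ minContingency D D Q t'' := by
              exact_mod_cast hmm
            linarith
        · rw [resp, resp, if_neg hAC'', if_pos hAC]
          positivity
      exact absurd hlt (not_lt.2 hle)
    · -- ¬ Q D : D itself is the unique C-repair
      have := hmax D subset_rfl hQD
      have hEq : D' = D := Finset.eq_of_subset_of_card_le hsub this
      exact htD' (hEq ▸ htD)
end

section
/- Let D be a database instance in which all tuples are endogenous and Q a monotone Boolean query. If a tuple t belongs to D and t is not a most responsible actual cause for Q, then t belongs to every C-repair of D with respect to ¬Q (i.e., the ground atomic query asserting t is C-consistently true). (Corollary 4) -/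
open scoped Classical

variable {α : Type*} [DecidableEq α]

/-- Corollary 4: a tuple of `D` that is not a most responsible actual cause
belongs to every C-repair. -/
theorem not_mrc_in_every_crepair (D : Finset α) (Q : Finset α → Prop)
    (hmono : MonotoneQuery Q) (t : α) (ht : t ∈ D)
    (hnot : ¬ IsMostResponsibleCause D D Q t) :
    ∀ D' : Finset α, IsCRepair D Q D' → t ∈ D' := by
  intro D' hrep
  obtain ⟨hsub, hnQ, hmax⟩ := hrep
  by_contra htD'
  have hins : insert t D' ⊆ D := Finset.insert_subset ht hsub
  have hcard1 : D'.card + 1 ≤ D.card := by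
    have := Finset.card_le_card hins
    rwa [Finset.card_insert_of_notMem htD'] at this
  -- every contingency set (for any tuple) has card ≥ D.card - D'.card - 1
  have key : ∀ (t' : α) (Γ : Finset α), IsContingency D D Q t' Γ →
      D.card ≤ D'.card + (Γ.card + 1) := by
    rintro t' Γ ⟨hΓ, -, -, hnq⟩
    have hle : (D \ (Γ ∪ {t'})).card ≤ D'.card :=
      hmax _ (Finset.sdiff_subset) hnq
    have hcov : D ⊆ (D \ (Γ ∪ {t'})) ∪ (Γ ∪ {t'}) := by
      intro x hx
      by_cases h : x ∈ Γ ∪ {t'} <;> simp [h, hx] <;> tauto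
    have h1 : D.card ≤ (D \ (Γ ∪ {t'})).card + (Γ ∪ {t'}).card :=
      le_trans (Finset.card_le_card hcov) (Finset.card_union_le _ _)
    have h2 : (Γ ∪ {t'}).card ≤ Γ.card + 1 := by
      simpa using Finset.card_union_le Γ ({t'} : Finset α)
    omega
  -- the canonical contingency set for t
  set Γ0 : Finset α := D \ (insert t D') with hΓ0def
  have hDsub : D \ Γ0 = insert t D' := by
    rw [hΓ0def, Finset.sdiff_sdiff_self_left, Finset.inter_eq_right.2 hins]
  have hQins : Q (insert t D') := by
    by_contra h
    have := hmax _ hins h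
    rw [Finset.card_insert_of_notMem htD'] at this
    omega
  have hDsub2 : D \ (Γ0 ∪ {t}) = D' := by
    ext x
    simp only [hΓ0def, Finset.mem_sdiff, Finset.mem_union, Finset.mem_singleton,
      Finset.mem_insert]
    constructor
    · rintro ⟨hxD, hx⟩
      push_neg at hx
      rcases hx.1 hxD with h | h
      · exact absurd h hx.2
      · exact h
    · intro hx
      refine ⟨hsub hx, ?_⟩
      push_neg
      exact ⟨fun _ => Or.inr hx, fun h => htD' (h ▸ hx)⟩
  have hcont : IsContingency D D Q t Γ0 := by
    refine ⟨Finset.sdiff_subset, ?_, ?_, ?_⟩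
    · simp [hΓ0def]
    · rw [hDsub]; exact hQins
    · rw [hDsub2]; exact hnQ
  have hΓ0card : Γ0.card = D.card - (D'.card + 1) := by
    rw [hΓ0def, Finset.card_sdiff_of_subset hins, Finset.card_insert_of_notMem htD']
  have hcause : IsActualCause D D Q t := ⟨ht, Γ0, hcont⟩
  -- the minimum contingency size for t is ≤ that for any actual cause t'
  have hmin_le : minContingency D D Q t ≤ Γ0.card :=
    Nat.sInf_le ⟨Γ0, hcont, rfl⟩
  have hresp_pos : ∀ m : ℕ, (0:ℚ) < 1 / (1 + (m:ℚ)) := by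
    intro m; positivity
  apply hnot
  refine ⟨hcause, fun t' => not_lt.2 ?_⟩
  unfold resp
  by_cases hc' : IsActualCause D D Q t'
  · simp only [hc', hcause, if_pos]
    -- minContingency for t' is ≥ Γ0.card
    have hne : {m : ℕ | ∃ Γ : Finset α, IsContingency D D Q t' Γ ∧ Γ.card = m}.Nonempty := by
      obtain ⟨-, Γ', hΓ'⟩ := hc'
      exact ⟨Γ'.card, Γ', hΓ', rfl⟩
    obtain ⟨Γ', hΓ', hcard'⟩ := Nat.sInf_mem hne
    have h1 : Γ0.card ≤ minContingency D D Q t' := by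
      have hk := key t' Γ' hΓ'
      have heq : minContingency D D Q t' = Γ'.card := hcard'.symm
      omega
    have h2 : minContingency D D Q t ≤ minContingency D D Q t' :=
      le_trans hmin_le h1
    apply one_div_le_one_div_of_le
    · positivity
    · have : (minContingency D D Q t : ℚ) ≤ (minContingency D D Q t' : ℚ) := by
        exact_mod_cast h2
      linarith
  · simp only [hc', if_neg, not_false_iff, hcause, if_pos]
    exact le_of_lt (hresp_pos _)
end

section
/- Let D = Dⁿ ∪ Dˣ be a database instance, Q a monotone Boolean query, and ℳ the associated diagnosis problem. A tuple t ∈ Dⁿ is an actual cause for Q if and only if 𝒟(ℳ,t) ≠ ∅, i.e., there exists a minimal diagnosis containing t. (Proposition 9) -/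
open scoped Classical

variable {α : Type*} [DecidableEq α]

private lemma exists_minimal_subset {α : Type*} [DecidableEq α] (P : Finset α → Prop)
    (Δ₀ : Finset α) (h : P Δ₀) :
    ∃ Δ, Δ ⊆ Δ₀ ∧ P Δ ∧ ∀ Δ', Δ' ⊂ Δ → ¬ P Δ' := by
  induction Δ₀ using Finset.strongInduction with
  | _ Δ₀ ih =>
    by_cases hmin : ∀ Δ', Δ' ⊂ Δ₀ → ¬ P Δ'
    · exact ⟨Δ₀, subset_rfl, h, hmin⟩
    · push_neg at hmin
      obtain ⟨Δ', hsub, hP⟩ := hmin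
      obtain ⟨Δ, h1, h2, h3⟩ := ih Δ' hsub hP
      exact ⟨Δ, h1.trans hsub.subset, h2, h3⟩

/-- Proposition 9: `t ∈ Dⁿ` is an actual cause for `Q` iff `𝒟(ℳ,t) ≠ ∅`. -/
theorem cause_iff_minimal_diagnosis (D Dn Dx : Finset α) (Q : Finset α → Prop)
    (hpart : D = Dn ∪ Dx) (hdisj : Disjoint Dn Dx) (hmono : MonotoneQuery Q)
    (t : α) (ht : t ∈ Dn) :
    IsActualCause D Dn Q t ↔ ∃ Δ : Finset α, IsMinimalDiagnosisWith D Dn Q t Δ := by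
  constructor
  · rintro ⟨-, Γ, hΓDn, htΓ, hQ, hnQ⟩
    -- Γ ∪ {t} is a diagnosis; shrink to a minimal one
    have hdiag : IsDiagnosis D Dn Q (Γ ∪ {t}) := by
      refine ⟨Finset.union_subset hΓDn (by simpa using ht), hnQ⟩
    obtain ⟨Δ, hsub, hΔ, hmin⟩ :=
      exists_minimal_subset (IsDiagnosis D Dn Q) (Γ ∪ {t}) hdiag
    have htΔ : t ∈ Δ := by
      by_contra htΔ
      have hΔΓ : Δ ⊆ Γ := by
        intro x hx
        rcases Finset.mem_union.1 (hsub hx) with h | h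
        · exact h
        · exact absurd (Finset.mem_singleton.1 h ▸ hx) htΔ
      exact hΔ.2 (hmono (Finset.sdiff_subset_sdiff subset_rfl hΔΓ) hQ)
    exact ⟨Δ, hΔ, htΔ, hmin⟩
  · rintro ⟨Δ, ⟨hΔDn, hnQ⟩, htΔ, hmin⟩
    refine ⟨ht, Δ \ {t}, Finset.sdiff_subset.trans hΔDn, by simp, ?_, ?_⟩
    · by_contra hQ
      exact hmin (Δ \ {t}) (Finset.sdiff_ssubset (by simpa using htΔ) (by simp))
        ⟨Finset.sdiff_subset.trans hΔDn, hQ⟩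
    · have : Δ \ {t} ∪ {t} = Δ := by
        ext x; simp only [Finset.mem_union, Finset.mem_sdiff, Finset.mem_singleton]
        constructor
        · rintro (⟨h, -⟩ | rfl) <;> [exact h; exact htΔ]
        · intro h; by_cases hx : x = t <;> simp [hx, h]
      rw [this]; exact hnQ
end

section
/- Let D = Dⁿ ∪ Dˣ be a database instance, Q a monotone Boolean query, ℳ the associated diagnosis problem, and t ∈ Dⁿ. Then: (a) ρ(t) = 0 if and only if MCD(ℳ,t) = ∅; (b) otherwise ρ(t) = 1/|s| for any s ∈ MCD(ℳ,t). (Proposition 10) -/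
open scoped Classical

variable {α : Type*} [DecidableEq α]

lemma cont_to_min_diag (D Dn : Finset α) (Q : Finset α → Prop) (hmono : MonotoneQuery Q)
    (t : α) (ht : t ∈ Dn) (Γ : Finset α) (hΓ : IsContingency D Dn Q t Γ) :
    ∃ Δ : Finset α, IsMinimalDiagnosisWith D Dn Q t Δ ∧ Δ.card ≤ Γ.card + 1 := by
  obtain ⟨hsub, htΓ, hQ, hnQ⟩ := hΓ
  set S : Set ℕ := {n | ∃ Δ' : Finset α, Δ' ⊆ Γ ∪ {t} ∧ IsDiagnosis D Dn Q Δ' ∧ Δ'.card = n}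
  have hne : S.Nonempty := by
    refine ⟨(Γ ∪ {t}).card, Γ ∪ {t}, subset_rfl, ⟨?_, hnQ⟩, rfl⟩
    exact Finset.union_subset hsub (Finset.singleton_subset_iff.mpr ht)
  obtain ⟨Δ, hΔsub, hΔdiag, hΔcard⟩ := Nat.sInf_mem hne
  have htΔ : t ∈ Δ := by
    by_contra htΔ
    have hΔΓ : Δ ⊆ Γ := by
      intro x hx
      rcases Finset.mem_union.mp (hΔsub hx) with h | h
      · exact h
      · exact absurd (Finset.mem_singleton.mp h ▸ hx) htΔ
    exact hΔdiag.2 (hmono (Finset.sdiff_subset_sdiff subset_rfl hΔΓ) hQ)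
  refine ⟨Δ, ⟨hΔdiag, htΔ, ?_⟩, ?_⟩
  · intro Δ' hss hd
    have : Δ'.card ∈ S := ⟨Δ', hss.subset.trans hΔsub, hd, rfl⟩
    have h1 := Nat.sInf_le this
    have h2 := Finset.card_lt_card hss
    omega
  · calc Δ.card ≤ (Γ ∪ {t}).card := Finset.card_le_card hΔsub
      _ ≤ Γ.card + 1 := by
          simpa using Finset.card_union_le Γ {t}

lemma min_diag_to_cont (D Dn : Finset α) (Q : Finset α → Prop)
    (t : α) (Δ : Finset α) (h : IsMinimalDiagnosisWith D Dn Q t Δ) :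
    IsContingency D Dn Q t (Δ \ {t}) ∧ (Δ \ {t}).card + 1 = Δ.card := by
  obtain ⟨⟨hsub, hnQ⟩, htΔ, hmin⟩ := h
  have hunion : (Δ \ {t}) ∪ {t} = Δ :=
    Finset.sdiff_union_of_subset (Finset.singleton_subset_iff.mpr htΔ)
  have hss : Δ \ {t} ⊂ Δ :=
    Finset.sdiff_ssubset (Finset.singleton_subset_iff.mpr htΔ) (Finset.singleton_nonempty t)
  have hQ : Q (D \ (Δ \ {t})) := by
    by_contra hq
    exact hmin _ hss ⟨(Finset.sdiff_subset).trans hsub, hq⟩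
  refine ⟨⟨(Finset.sdiff_subset).trans hsub, by simp, hQ, by rw [hunion]; exact hnQ⟩, ?_⟩
  have h1 := Finset.card_sdiff_of_subset (Finset.singleton_subset_iff.mpr htΔ)
  have h2 : 1 ≤ Δ.card := Finset.card_pos.mpr ⟨t, htΔ⟩
  simp at h1
  omega

/-- Proposition 10: responsibility via the minimum-cardinality diagnoses
containing `t`. -/
theorem resp_via_mcd (D Dn Dx : Finset α) (Q : Finset α → Prop)
    (hpart : D = Dn ∪ Dx) (hdisj : Disjoint Dn Dx) (hmono : MonotoneQuery Q)
    (t : α) (ht : t ∈ Dn) :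
    (resp D Dn Q t = 0 ↔ ¬ ∃ Δ : Finset α, IsMCDWith D Dn Q t Δ) ∧
    (∀ Δ : Finset α, IsMCDWith D Dn Q t Δ → resp D Dn Q t = 1 / (Δ.card : ℚ)) := by
  have key : ∀ Δ : Finset α, IsMCDWith D Dn Q t Δ →
      IsActualCause D Dn Q t ∧ minContingency D Dn Q t + 1 = Δ.card := by
    intro Δ hΔ
    obtain ⟨hcont, hcard⟩ := min_diag_to_cont D Dn Q t Δ hΔ.1
    have hac : IsActualCause D Dn Q t := ⟨ht, _, hcont⟩
    refine ⟨hac, ?_⟩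
    set T : Set ℕ := {m | ∃ Γ : Finset α, IsContingency D Dn Q t Γ ∧ Γ.card = m}
    have hTne : T.Nonempty := ⟨(Δ \ {t}).card, _, hcont, rfl⟩
    have hle : minContingency D Dn Q t ≤ (Δ \ {t}).card := Nat.sInf_le ⟨_, hcont, rfl⟩
    obtain ⟨Γ₀, hΓ₀, hΓ₀card⟩ := Nat.sInf_mem hTne
    obtain ⟨Δ', hΔ', hΔ'card⟩ := cont_to_min_diag D Dn Q hmono t ht Γ₀ hΓ₀
    have hge := hΔ.2 Δ' hΔ'
    have : minContingency D Dn Q t = sInf T := rfl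
    omega
  constructor
  · constructor
    · rintro h0 ⟨Δ, hΔ⟩
      obtain ⟨hac, hm⟩ := key Δ hΔ
      rw [resp, if_pos hac] at h0
      have hpos : (0:ℚ) < 1 + (minContingency D Dn Q t : ℚ) := by positivity
      rw [div_eq_zero_iff] at h0
      rcases h0 with h | h
      · exact one_ne_zero h
      · exact hpos.ne' h
    · intro hno
      rw [resp, if_neg]
      intro hac
      apply hno
      obtain ⟨_, Γ, hΓ⟩ := hac
      obtain ⟨Δ, hΔ, -⟩ := cont_to_min_diag D Dn Q hmono t ht Γ hΓ
      have hne : {n : ℕ | ∃ Δ' : Finset α, IsMinimalDiagnosisWith D Dn Q t Δ' ∧ Δ'.card = n}.Nonempty :=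
        ⟨Δ.card, Δ, hΔ, rfl⟩
      obtain ⟨Δ₀, h₀, hc⟩ := Nat.sInf_mem hne
      exact ⟨Δ₀, h₀, fun Δ' h' => hc ▸ Nat.sInf_le ⟨Δ', h', rfl⟩⟩
  · intro Δ hΔ
    obtain ⟨hac, hm⟩ := key Δ hΔ
    rw [resp, if_pos hac]
    have : (1:ℚ) + (minContingency D Dn Q t : ℚ) = (Δ.card : ℚ) := by
      push_cast [← hm]; ring
    rw [this]
end

section
/- Let D be a database instance in which all tuples are endogenous and Q a monotone Boolean query with ¬Q ∅ (the empty instance satisfies the denial constraints). Then D is consistent (¬Q D holds) if and only if there is no actual cause for Q in D, i.e., CS(D, ∅, Q) = ∅. (Claim proved in Section 4) -/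
open scoped Classical

variable {α : Type*} [DecidableEq α]

/-- Section 4 claim: `D` is consistent wrt the denial constraints iff there is
no actual cause for `Q` in `D` (all tuples endogenous). -/
theorem consistent_iff_no_causes (D : Finset α) (Q : Finset α → Prop)
    (hmono : MonotoneQuery Q) (hQempty : ¬ Q ∅) :
    ¬ Q D ↔ ∀ t : α, ¬ IsActualCause D D Q t := by
  constructor
  · intro hD t ⟨ht, Γ, hΓ, htΓ, hQ, _⟩
    exact hD (hmono (Finset.sdiff_subset) hQ)
  · intro h
    intro hQD
    -- pick a minimum-cardinality subset S of D with Q S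
    have hne : (D.powerset.filter (fun S => Q S)).Nonempty :=
      ⟨D, by simp [hQD]⟩
    obtain ⟨S, hS, hmin⟩ := Finset.exists_min_image _ (fun S => S.card) hne
    simp only [Finset.mem_filter, Finset.mem_powerset] at hS
    obtain ⟨hSD, hQS⟩ := hS
    have hSne : S.Nonempty := by
      rcases S.eq_empty_or_nonempty with rfl | h
      · exact absurd hQS hQempty
      · exact h
    obtain ⟨t, htS⟩ := hSne
    apply h t
    refine ⟨hSD htS, D \ S, Finset.sdiff_subset, by simp [htS], ?_, ?_⟩
    · have : D \ (D \ S) = S := Finset.sdiff_sdiff_eq_self hSD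
      rw [this]; exact hQS
    · intro hQ'
      have hsub : D \ (D \ S ∪ {t}) = S \ {t} := by
        rw [Finset.sdiff_union_distrib, Finset.sdiff_sdiff_eq_self hSD]
        ext x
        simp only [Finset.mem_inter, Finset.mem_sdiff, Finset.mem_singleton]
        constructor
        · rintro ⟨hxS, _, hxt⟩; exact ⟨hxS, hxt⟩
        · rintro ⟨hxS, hxt⟩; exact ⟨hxS, hSD hxS, hxt⟩
      rw [hsub] at hQ'
      have hmem : S \ {t} ∈ D.powerset.filter (fun S => Q S) := by
        simp only [Finset.mem_filter, Finset.mem_powerset]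
        exact ⟨(Finset.sdiff_subset).trans hSD, hQ'⟩
      have := hmin _ hmem
      have hcard : (S \ {t}).card < S.card := by
        apply Finset.card_lt_card
        constructor
        · exact Finset.sdiff_subset
        · intro hsub2
          have := hsub2 htS
          simp at this
      omega
end
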